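/- arXiv:1303.0164 — 7 statements merged into one kernel-verified Lean document; each statement's English description precedes it below -/
import Mathlib

section
/- Let k be an algebraically closed field with a nontrivial nonarchimedean absolute value, and let F be a field extension of k that is finitely generated of transcendence degree 1 over k. If v is an absolute value on F extending that of k which is a point of type II, then the value group of v on F equals the value group of k: v(F^×) = |k^×| as subgroups of the positive reals. -/
noncomputable section

/-- An absolute value is nonarchimedean if it satisfies the ultrametric inequality. -/
def IsNA {F : Type*} [Field F] (v : AbsoluteValue F ℝ) : Prop :=
  ∀ x y : F, v (x + y) ≤ max (v x) (v y)

/-- A field is complete with respect to an absolute value if every Cauchy sequence converges. -/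
def SeqComplete {F : Type*} [Field F] (v : AbsoluteValue F ℝ) : Prop :=
  ∀ s : ℕ → F, (∀ ε : ℝ, 0 < ε → ∃ N : ℕ, ∀ m ≥ N, ∀ n ≥ N, v (s m - s n) < ε) →
    ∃ L : F, ∀ ε : ℝ, 0 < ε → ∃ N : ℕ, ∀ n ≥ N, v (s n - L) < ε

/-- The valuation ring `O_v = {f | v f ≤ 1}` of a nonarchimedean absolute value. -/
def vRing {F : Type*} [Field F] (v : AbsoluteValue F ℝ) (h : IsNA v) : Subring F where
  carrier := {x : F | v x ≤ 1}
  mul_mem' := fun {a b} ha hb => by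
    simp only [Set.mem_setOf_eq, map_mul] at *
    exact mul_le_one₀ ha (v.nonneg b) hb
  one_mem' := by simp only [Set.mem_setOf_eq, map_one, le_refl]
  add_mem' := fun {a b} ha hb => le_trans (h a b) (max_le ha hb)
  zero_mem' := by simp only [Set.mem_setOf_eq, map_zero, zero_le_one]
  neg_mem' := fun {a} ha => by simpa only [Set.mem_setOf_eq, v.map_neg] using ha

/-- The maximal ideal `{f | v f < 1}` of the valuation ring. -/
def vIdeal {F : Type*} [Field F] (v : AbsoluteValue F ℝ) (h : IsNA v) :
    Ideal (vRing v h) where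
  carrier := {x : vRing v h | v (x : F) < 1}
  add_mem' := fun {a b} ha hb => lt_of_le_of_lt (h a b) (max_lt ha hb)
  zero_mem' := by simp only [Set.mem_setOf_eq, ZeroMemClass.coe_zero, map_zero, zero_lt_one]
  smul_mem' := fun c x hx => by
    simp only [Set.mem_setOf_eq, smul_eq_mul, Subring.coe_mul, map_mul] at *
    have h1 : v (c : F) ≤ 1 := c.2
    nlinarith [v.nonneg (c : F), v.nonneg (x : F)]

/-- The residue field `κ(v)` of a nonarchimedean absolute value. -/
abbrev ResF {F : Type*} [Field F] (v : AbsoluteValue F ℝ) (h : IsNA v) :=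
  vRing v h ⧸ vIdeal v h

/-- The induced map of residue fields `κ(v) → κ(w)` coming from an embedding of
valued fields `σ : F → F'` with `w ∘ σ = v`. -/
def resMap {F F' : Type*} [Field F] [Field F'] (σ : F →+* F')
    (v : AbsoluteValue F ℝ) (w : AbsoluteValue F' ℝ) (hv : IsNA v) (hw : IsNA w)
    (hc : ∀ f : F, w (σ f) = v f) :
    ResF v hv →+* ResF w hw :=
  Ideal.quotientMap (vIdeal w hw)
    ((σ.comp (vRing v hv).subtype).codRestrict (vRing w hw)
      (fun x => by
        have hx : v (x : F) ≤ 1 := x.2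
        show σ (x : F) ∈ vRing w hw
        show w (σ (x : F)) ≤ 1
        rw [hc]
        exact hx))
    (fun x hx => by
      have hx' : v (x : F) < 1 := hx
      show _ ∈ vIdeal w hw
      show w (σ (x : F)) < 1
      rw [hc]
      exact hx')


set_option maxHeartbeats 1000000
set_option synthInstance.maxHeartbeats 200000

lemma vsum_le {F : Type*} [Field F] {v : AbsoluteValue F ℝ} (h : IsNA v)
    {ι : Type*} (s : Finset ι) (t : ι → F) {C : ℝ} (hC : 0 ≤ C)
    (hb : ∀ i ∈ s, v (t i) ≤ C) : v (∑ i ∈ s, t i) ≤ C := by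
  classical
  induction s using Finset.induction_on with
  | empty => simpa using hC
  | insert _ _ hni ih =>
    rename_i a s'
    rw [Finset.sum_insert hni]
    refine le_trans (h _ _) (max_le (hb _ (Finset.mem_insert_self a s')) (ih ?_))
    exact fun i hi => hb i (Finset.mem_insert_of_mem hi)

lemma vsum_lt {F : Type*} [Field F] {v : AbsoluteValue F ℝ} (h : IsNA v)
    {ι : Type*} (s : Finset ι) (t : ι → F) {C : ℝ} (hC : 0 < C)
    (hb : ∀ i ∈ s, v (t i) < C) : v (∑ i ∈ s, t i) < C := by
  classical
  induction s using Finset.induction_on with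
  | empty => simpa using hC
  | insert _ _ hni ih =>
    rename_i a s'
    rw [Finset.sum_insert hni]
    refine lt_of_le_of_lt (h _ _) (max_lt (hb _ (Finset.mem_insert_self a s')) (ih ?_))
    exact fun i hi => hb i (Finset.mem_insert_of_mem hi)

/-- A finite sum of nonzero terms with pairwise distinct values is nonzero. -/
lemma sum_ne_zero_of_distinct_vals {F : Type*} [Field F] {v : AbsoluteValue F ℝ} (h : IsNA v)
    {ι : Type*} [DecidableEq ι] {s : Finset ι} (hs : s.Nonempty) (t : ι → F)
    (h0 : ∀ i ∈ s, t i ≠ 0)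
    (hd : ∀ i ∈ s, ∀ j ∈ s, i ≠ j → v (t i) ≠ v (t j)) :
    ∑ i ∈ s, t i ≠ 0 := by
  obtain ⟨i₀, hi₀, hmax⟩ := s.exists_max_image (fun i => v (t i)) hs
  intro hsum
  have h1 : t i₀ = -∑ i ∈ s.erase i₀, t i := by
    have := Finset.add_sum_erase s t hi₀
    rw [hsum] at this
    exact eq_neg_of_add_eq_zero_left this
  have h2 : v (∑ i ∈ s.erase i₀, t i) < v (t i₀) := by
    refine vsum_lt h _ _ (v.pos (h0 i₀ hi₀)) ?_
    intro i hi
    rcases Finset.mem_erase.mp hi with ⟨hne, his⟩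
    exact lt_of_le_of_ne (hmax i his) (hd i his i₀ hi₀ hne)
  rw [h1, v.map_neg] at h2
  exact lt_irrefl _ h2


section Swap
open Polynomial
variable {k : Type*} [Field k]

lemma ringHom_ext₂ {S : Type*} [Semiring S] {f g : Polynomial (Polynomial k) →+* S}
    (h1 : ∀ a : k, f (C (C a)) = g (C (C a))) (h2 : f (C X) = g (C X)) (h3 : f X = g X) :
    f = g := by
  refine Polynomial.ringHom_ext (fun p => ?_) h3
  have : f.comp (C : Polynomial k →+* Polynomial (Polynomial k)) =
      g.comp (C : Polynomial k →+* Polynomial (Polynomial k)) :=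
    Polynomial.ringHom_ext h1 h2
  exact DFunLike.congr_fun this p

/-- The swap of the two variables of `k[Y][Z]`. -/
def swapPP (k : Type*) [Field k] : Polynomial (Polynomial k) →+* Polynomial (Polynomial k) :=
  eval₂RingHom (eval₂RingHom ((C : Polynomial k →+* Polynomial (Polynomial k)).comp C) X) (C X)

@[simp] lemma swapPP_CC (a : k) : swapPP k (C (C a)) = C (C a) := by
  simp [swapPP]

@[simp] lemma swapPP_CX : swapPP k (C (X : Polynomial k)) = X := by
  simp [swapPP]

@[simp] lemma swapPP_X : swapPP k (X : Polynomial (Polynomial k)) = C X := by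
  simp [swapPP]

lemma swapPP_swapPP (Q : Polynomial (Polynomial k)) : swapPP k (swapPP k Q) = Q := by
  have : (swapPP k).comp (swapPP k) = RingHom.id _ :=
    ringHom_ext₂ (by simp) (by simp) (by simp)
  exact DFunLike.congr_fun this Q

lemma swapPP_injective : Function.Injective (swapPP k) :=
  Function.LeftInverse.injective swapPP_swapPP

variable {F : Type*} [Field F] [Algebra k F]

/-- Evaluation `k[Y][Z] → F`, inner variable `Y ↦ a`, outer variable `Z ↦ b`. -/
def evFF (a b : F) : Polynomial (Polynomial k) →+* F :=
  eval₂RingHom (eval₂RingHom (algebraMap k F) a) b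

@[simp] lemma evFF_CC (a b : F) (c : k) : evFF a b (C (C c)) = algebraMap k F c := by
  simp [evFF]

@[simp] lemma evFF_CX (a b : F) : evFF a b (C (X : Polynomial k)) = a := by
  simp [evFF]

@[simp] lemma evFF_X (a b : F) : evFF a b (X : Polynomial (Polynomial k)) = b := by
  simp [evFF]

lemma evFF_swapPP (a b : F) (Q : Polynomial (Polynomial k)) :
    evFF a b (swapPP k Q) = evFF b a Q := by
  have : (evFF a b).comp (swapPP k) = evFF (k := k) b a :=
    ringHom_ext₂ (by simp) (by simp) (by simp)
  exact DFunLike.congr_fun this Q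

end Swap

open Polynomial in
lemma coeff_sum_CX {R : Type*} [CommRing R] (s : Finset ℕ) (a : ℕ → R) (j : ℕ) :
    (∑ i ∈ s, C (a i) * X ^ i).coeff j = if j ∈ s then a j else 0 := by
  classical
  rw [Polynomial.finset_sum_coeff]
  rw [Finset.sum_congr rfl (fun i _ => by rw [Polynomial.coeff_C_mul, Polynomial.coeff_X_pow])]
  simp [Finset.sum_ite_eq', eq_comm]

lemma keyC {k F : Type*} [Field k] [Field F] [Algebra k F]
    (va : AbsoluteValue k ℝ) (hka : IsNA va)
    (v : AbsoluteValue F ℝ) (hv : IsNA v)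
    (hvk : ∀ c : k, v (algebraMap k F c) = va c)
    (X : vRing v hv)
    (htr : ∀ p : Polynomial (ResF va hka),
      Polynomial.eval₂ (resMap (algebraMap k F) va v hka hv hvk)
        (Ideal.Quotient.mk (vIdeal v hv) X) p = 0 → p = 0)
    (p : Polynomial k) (hp : p ≠ 0) :
    ∃ c : k, c ≠ 0 ∧ v (Polynomial.aeval (X : F) p) = va c := by
  classical
  have hsupp : p.support.Nonempty := Polynomial.support_nonempty.mpr hp
  obtain ⟨i₀, hi₀, hmax⟩ := p.support.exists_max_image (fun i => va (p.coeff i)) hsupp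
  set c := p.coeff i₀ with hc
  have hc0 : c ≠ 0 := Polynomial.mem_support_iff.mp hi₀
  have hvc : 0 < va c := va.pos hc0
  refine ⟨c, hc0, ?_⟩
  set q : Polynomial k := Polynomial.C c⁻¹ * p with hqdef
  have hpq : p = Polynomial.C c * q := by
    rw [hqdef, ← mul_assoc, ← Polynomial.C_mul, mul_inv_cancel₀ hc0, Polynomial.C_1, one_mul]
  have hq_le : ∀ i, va (q.coeff i) ≤ 1 := by
    intro i
    rcases em (i ∈ p.support) with his|his
    · rw [hqdef, Polynomial.coeff_C_mul, map_mul, map_inv₀, inv_mul_le_iff₀ hvc]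
      simpa using hmax i his
    · have h0 : p.coeff i = 0 := Polynomial.notMem_support_iff.mp his
      rw [hqdef, Polynomial.coeff_C_mul, h0, mul_zero, map_zero]
      exact zero_le_one
  have hq_i₀ : va (q.coeff i₀) = 1 := by
    rw [hqdef, Polynomial.coeff_C_mul, map_mul, map_inv₀, ← hc, inv_mul_cancel₀ (ne_of_gt hvc)]
  have hmemX : v (X : F) ≤ 1 := X.2
  have key_sum : Polynomial.aeval (X : F) q
      = ∑ i ∈ q.support, algebraMap k F (q.coeff i) * (X : F) ^ i := by
    rw [Polynomial.aeval_def, Polynomial.eval₂_eq_sum, Polynomial.sum_def]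
  have hmem : Polynomial.aeval (X : F) q ∈ vRing v hv := by
    show v _ ≤ 1
    rw [key_sum]
    refine vsum_le hv _ _ zero_le_one ?_
    intro i hi
    rw [v.map_mul, v.map_pow, hvk]
    exact mul_le_one₀ (hq_le i) (pow_nonneg (v.nonneg _) i)
      (pow_le_one₀ (v.nonneg _) hmemX)
  -- the restriction of the algebra map to valuation rings
  set G : vRing va hka →+* vRing v hv :=
    (((algebraMap k F)).comp (vRing va hka).subtype).codRestrict (vRing v hv)
      (fun y => by
        have hy : va (y : k) ≤ 1 := y.2
        show v (algebraMap k F (y : k)) ≤ 1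
        rw [hvk]; exact hy) with hG
  set π := Ideal.Quotient.mk (vIdeal v hv) with hπ
  set πk := Ideal.Quotient.mk (vIdeal va hka) with hπk
  set Y : vRing v hv := ⟨Polynomial.aeval (X : F) q, hmem⟩ with hY
  set qt : Polynomial (ResF va hka) :=
    ∑ i ∈ q.support, Polynomial.C (πk ⟨q.coeff i, hq_le i⟩) * Polynomial.X ^ i with hqt
  have hi₀q : i₀ ∈ q.support := by
    rw [Polynomial.mem_support_iff]
    intro h0
    rw [h0, map_zero] at hq_i₀
    norm_num at hq_i₀
  have hqt0 : qt ≠ 0 := by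
    intro h0
    have h1 : qt.coeff i₀ = πk ⟨q.coeff i₀, hq_le i₀⟩ := by
      rw [hqt, coeff_sum_CX, if_pos hi₀q]
    rw [h0, Polynomial.coeff_zero] at h1
    have h2 : (⟨q.coeff i₀, hq_le i₀⟩ : vRing va hka) ∈ vIdeal va hka :=
      (Ideal.Quotient.eq_zero_iff_mem).mp h1.symm
    have h3 : va (q.coeff i₀) < 1 := h2
    rw [hq_i₀] at h3
    exact lt_irrefl _ h3
  have hYsum : Y = ∑ i ∈ q.support, G ⟨q.coeff i, hq_le i⟩ * X ^ i := by
    apply Subtype.ext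
    rw [hY]
    show Polynomial.aeval (X : F) q = _
    rw [key_sum]
    have := map_sum (vRing v hv).subtype (fun i => G ⟨q.coeff i, hq_le i⟩ * X ^ i) q.support
    rw [show ((∑ i ∈ q.support, G ⟨q.coeff i, hq_le i⟩ * X ^ i : vRing v hv) : F)
        = (vRing v hv).subtype (∑ i ∈ q.support, G ⟨q.coeff i, hq_le i⟩ * X ^ i) from rfl, this]
    refine Finset.sum_congr rfl (fun i _ => ?_)
    rw [map_mul, map_pow]
    rfl
  have hres : π Y = Polynomial.eval₂ (resMap (algebraMap k F) va v hka hv hvk) (π X) qt := by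
    rw [hYsum, map_sum, hqt, Polynomial.eval₂_finset_sum]
    refine Finset.sum_congr rfl (fun i _ => ?_)
    rw [Polynomial.eval₂_mul, Polynomial.eval₂_C, Polynomial.eval₂_X_pow, map_mul, map_pow]
    congr 1
  have hπY : π Y ≠ 0 := by
    rw [hres]
    intro h0
    exact hqt0 (htr qt h0)
  have hv1 : v (Polynomial.aeval (X : F) q) = 1 := by
    refine le_antisymm hmem ?_
    by_contra hlt
    push_neg at hlt
    have : Y ∈ vIdeal v hv := hlt
    exact hπY (Ideal.Quotient.eq_zero_iff_mem.mpr this)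
  rw [hpq, map_mul, Polynomial.aeval_C, v.map_mul, hvk, hv1, mul_one]

/-- Let `k` be an algebraically closed field, complete with respect to a
nontrivial nonarchimedean absolute value `va`, and `F/k` a finitely generated extension
of transcendence degree `1`.  If `v` is an absolute value on `F` extending that of `k`
which is a point of type II, then the value group of `v` on `F` equals the value group
of `k`: `v(Fˣ) = |kˣ|` as subgroups (subsets) of the positive reals. -/
theorem statement2
    {k F : Type*} [Field k] [Field F] [Algebra k F]
    [IsAlgClosed k]
    (va : AbsoluteValue k ℝ) (hka : IsNA va)
    (hknt : ∃ c : k, c ≠ 0 ∧ va c ≠ 1)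
    (hkcomplete : SeqComplete va)
    -- F is finitely generated of transcendence degree 1 over k
    (hFfg : ∃ x : F, Transcendental k x ∧
      FiniteDimensional (IntermediateField.adjoin k {x}) F)
    -- v is an absolute value on F extending that of k
    (v : AbsoluteValue F ℝ) (hv : IsNA v)
    (hvk : ∀ c : k, v (algebraMap k F c) = va c)
    -- v is a point of type II
    (htypeII : ∃ ξ : ResF v hv,
      @IsTranscendenceBasis Unit (ResF va hka) (ResF v hv) _ _
        (resMap (algebraMap k F) va v hka hv hvk).toAlgebra (fun _ => ξ)) :
    {t : ℝ | ∃ f : F, f ≠ 0 ∧ v f = t} = {t : ℝ | ∃ c : k, c ≠ 0 ∧ va c = t} := by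
  classical
  letI : Algebra (ResF va hka) (ResF v hv) :=
    (resMap (algebraMap k F) va v hka hv hvk).toAlgebra
  obtain ⟨x, hxt, hfd⟩ := hFfg
  obtain ⟨ξ, hξbasis⟩ := htypeII
  obtain ⟨X, hX⟩ := Ideal.Quotient.mk_surjective (I := vIdeal v hv) ξ
  have htransc : Transcendental (ResF va hka) ξ := hξbasis.1.transcendental ()
  have htr : ∀ p : Polynomial (ResF va hka),
      Polynomial.eval₂ (resMap (algebraMap k F) va v hka hv hvk)
        (Ideal.Quotient.mk (vIdeal v hv) X) p = 0 → p = 0 := by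
    intro p hp
    rw [hX] at hp
    refine (transcendental_iff (R := ResF va hka) (A := ResF v hv) (x := ξ)).mp htransc p ?_
    rw [Polynomial.aeval_def, RingHom.algebraMap_toAlgebra]
    exact hp
  have hkey : ∀ p : Polynomial k, p ≠ 0 →
      ∃ c : k, c ≠ 0 ∧ v (Polynomial.aeval ((X : F)) p) = va c :=
    keyC va hka v hv hvk X htr
  set X' : F := (X : F) with hX'
  have hXt : ∀ p : Polynomial k, Polynomial.aeval X' p = 0 → p = 0 := by
    intro p hp
    by_contra h0
    obtain ⟨c, hc0, hc⟩ := hkey p h0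
    rw [hp, map_zero] at hc
    exact hc0 (va.eq_zero.mp hc.symm)
  set K' : IntermediateField k F := IntermediateField.adjoin k {X'} with hK'
  have hK'val : ∀ a : F, a ∈ K' → a ≠ 0 → ∃ c : k, c ≠ 0 ∧ v a = va c := by
    intro a ha h0
    obtain ⟨r, s, hrs⟩ := (IntermediateField.mem_adjoin_simple_iff k a).mp ha
    have hsev : Polynomial.aeval X' s ≠ 0 := by
      intro hz; rw [hz, div_zero] at hrs; exact h0 hrs
    have hs0 : s ≠ 0 := fun h => hsev (by rw [h, map_zero])
    have hrev : Polynomial.aeval X' r ≠ 0 := by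
      intro hz; rw [hz, zero_div] at hrs; exact h0 hrs
    have hr0 : r ≠ 0 := fun h => hrev (by rw [h, map_zero])
    obtain ⟨c1, hc10, hc1⟩ := hkey r hr0
    obtain ⟨c2, hc20, hc2⟩ := hkey s hs0
    refine ⟨c1 / c2, div_ne_zero hc10 hc20, ?_⟩
    rw [hrs, map_div₀, map_div₀, hc1, hc2]
  -- X' is algebraic over K = k(x)
  have hKX' : IsAlgebraic (IntermediateField.adjoin k {x}) X' :=
    (IsIntegral.of_finite (IntermediateField.adjoin k {x}) X').isAlgebraic
  obtain ⟨P, hP0, hPev⟩ := hKX'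
  -- clear denominators
  have hrs : ∀ i : ℕ, ∃ rs : Polynomial k × Polynomial k,
      Polynomial.aeval x rs.2 ≠ 0 ∧
      (P.coeff i : F) * Polynomial.aeval x rs.2 = Polynomial.aeval x rs.1 := by
    intro i
    rcases em ((P.coeff i : F) = 0) with h|h
    · exact ⟨(0, 1), by simp, by simp [h]⟩
    · obtain ⟨r, s, hrseq⟩ :=
        (IntermediateField.mem_adjoin_simple_iff k ((P.coeff i : F))).mp (P.coeff i).2
      have hsev : Polynomial.aeval x s ≠ 0 := by
        intro hz; rw [hz, div_zero] at hrseq; exact h hrseq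
      refine ⟨(r, s), hsev, ?_⟩
      rw [hrseq]
      field_simp
  choose rs hs1 hs2 using hrs
  set D : F := ∏ j ∈ P.support, Polynomial.aeval x (rs j).2 with hD
  have hD0 : D ≠ 0 := Finset.prod_ne_zero_iff.mpr (fun j _ => hs1 j)
  set u : ℕ → Polynomial k := fun i => (rs i).1 * ∏ j ∈ P.support.erase i, (rs j).2 with hu
  have huev : ∀ i ∈ P.support, Polynomial.aeval x (u i) = (P.coeff i : F) * D := by
    intro i hi
    rw [hu]
    simp only [map_mul, map_prod]
    rw [← hs2 i, hD, ← Finset.mul_prod_erase P.support (fun j => Polynomial.aeval x (rs j).2) hi]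
    ring
  set Q : Polynomial (Polynomial k) :=
    ∑ i ∈ P.support, Polynomial.C (u i) * Polynomial.X ^ i with hQ
  have evFF_C : ∀ (a b : F) (p : Polynomial k),
      evFF a b (Polynomial.C p) = Polynomial.aeval a p := by
    intro a b p
    rw [Polynomial.aeval_def]
    simp [evFF, Polynomial.coe_eval₂RingHom]
  have hPsum : ∑ i ∈ P.support, (P.coeff i : F) * X' ^ i = 0 := by
    have h1 : Polynomial.aeval X' P
        = ∑ i ∈ P.support, ((algebraMap (IntermediateField.adjoin k {x}) F) (P.coeff i)) * X' ^ i := by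
      rw [Polynomial.aeval_def, Polynomial.eval₂_eq_sum, Polynomial.sum_def]
    rw [← hPev, h1]
    rfl
  have hQev : evFF x X' Q = 0 := by
    rw [hQ, map_sum]
    have h2 : ∀ i ∈ P.support,
        evFF x X' (Polynomial.C (u i) * Polynomial.X ^ i) = D * ((P.coeff i : F) * X' ^ i) := by
      intro i hi
      rw [map_mul, map_pow, evFF_C, evFF_X, huev i hi]
      ring
    rw [Finset.sum_congr rfl h2, ← Finset.mul_sum, hPsum, mul_zero]
  obtain ⟨i₀, hi₀⟩ := Polynomial.support_nonempty.mpr hP0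
  have hu₀ : u i₀ ≠ 0 := by
    intro h0
    have h1 : (P.coeff i₀ : F) * D = 0 := by rw [← huev i₀ hi₀, h0, map_zero]
    rcases mul_eq_zero.mp h1 with h2|h2
    · exact Polynomial.mem_support_iff.mp hi₀ (by exact_mod_cast h2)
    · exact hD0 h2
  have hQ0 : Q ≠ 0 := by
    intro h0
    have h1 : Q.coeff i₀ = u i₀ := by rw [hQ, coeff_sum_CX, if_pos hi₀]
    rw [h0, Polynomial.coeff_zero] at h1
    exact hu₀ h1.symm
  -- swap variables
  set Q' : Polynomial (Polynomial k) := swapPP k Q with hQ'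
  have hQ'0 : Q' ≠ 0 := by
    intro h0
    exact hQ0 (swapPP_injective (by rw [← hQ', h0, map_zero]))
  have hQ'ev : evFF X' x Q' = 0 := by
    rw [hQ', evFF_swapPP]
    exact hQev
  -- x is algebraic over K'
  have hmemK' : ∀ p : Polynomial k, Polynomial.aeval X' p ∈ K' := by
    intro p
    have h1 : Polynomial.aeval X' p ∈ Algebra.adjoin k ({X'} : Set F) := by
      rw [Algebra.adjoin_singleton_eq_range_aeval]
      exact ⟨p, rfl⟩
    exact IntermediateField.algebra_adjoin_le_adjoin k {X'} h1
  set ψ : Polynomial k →+* K' :=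
    RingHom.codRestrict ((Polynomial.aeval X' : Polynomial k →ₐ[k] F) :
      Polynomial k →+* F) K' hmemK' with hψ
  set W : Polynomial K' := Q'.map ψ with hW
  have hW0 : W ≠ 0 := by
    obtain ⟨j, hj⟩ := Polynomial.support_nonempty.mpr hQ'0
    have h1 : W.coeff j = ψ (Q'.coeff j) := Polynomial.coeff_map ψ j
    intro h0
    rw [h0, Polynomial.coeff_zero] at h1
    have h2 : Polynomial.aeval X' (Q'.coeff j) = 0 := by
      have h3 : ((ψ (Q'.coeff j) : K') : F) = Polynomial.aeval X' (Q'.coeff j) :=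
        RingHom.codRestrict_apply _ _ hmemK' _
      rw [← h3, ← h1]
      rfl
    exact Polynomial.mem_support_iff.mp hj (hXt _ h2)
  have hWev : Polynomial.aeval x W = 0 := by
    rw [hW, Polynomial.aeval_def, Polynomial.eval₂_map]
    have hcomp : (algebraMap K' F).comp ψ = Polynomial.eval₂RingHom (algebraMap k F) X' := by
      refine Polynomial.ringHom_ext (fun a => ?_) ?_
      · show ((ψ (Polynomial.C a) : K') : F) = _
        refine (RingHom.codRestrict_apply _ _ hmemK' _).trans ?_; simp
      · show ((ψ Polynomial.X : K') : F) = _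
        refine (RingHom.codRestrict_apply _ _ hmemK' _).trans ?_; simp
    rw [hcomp]
    exact hQ'ev
  have hxalgK' : IsAlgebraic K' x := ⟨W, hW0, hWev⟩
  have hxint : IsIntegral K' x := hxalgK'.isIntegral
  haveI hfd1 : FiniteDimensional K' (IntermediateField.adjoin K' {x}) :=
    IntermediateField.adjoin.finiteDimensional hxint
  set M : IntermediateField K' F := IntermediateField.adjoin K' {x} with hM
  have hKM : (IntermediateField.adjoin k {x}) ≤ M.restrictScalars k := by
    rw [IntermediateField.adjoin_le_iff]
    intro y hy
    rw [Set.mem_singleton_iff] at hy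
    subst hy
    show y ∈ M
    exact IntermediateField.mem_adjoin_simple_self K' y
  haveI hfd2 : FiniteDimensional M F := by
    obtain ⟨s, hs⟩ := Module.finite_def.mp hfd
    refine Module.finite_def.mpr ⟨s, ?_⟩
    rw [eq_top_iff]
    rintro y -
    have hy : y ∈ Submodule.span (IntermediateField.adjoin k {x}) (↑s : Set F) := by
      rw [hs]; trivial
    refine Submodule.span_induction (fun z hz => Submodule.subset_span hz)
      (Submodule.zero_mem _) (fun z w _ _ hz hw => Submodule.add_mem _ hz hw) ?_ hy
    intro c z _ hz
    have hcM : (c : F) ∈ M := hKM c.2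
    have h1 : c • z = (⟨(c : F), hcM⟩ : M) • z := rfl
    rw [h1]
    exact Submodule.smul_mem _ _ hz
  haveI hfdK'F : FiniteDimensional K' F := FiniteDimensional.trans K' M F
  have hfalg : ∀ f : F, IsAlgebraic K' f := fun f => (IsIntegral.of_finite K' f).isAlgebraic
  -- main claim
  have main : ∀ f : F, f ≠ 0 → ∃ c : k, c ≠ 0 ∧ v f = va c := by
    intro f hf0
    have hvf : 0 < v f := v.pos hf0
    -- the case analysis helper
    have hcase : ∀ (a b : k) (m n : ℕ), a ≠ 0 → b ≠ 0 → m < n →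
        va a * v f ^ m = va b * v f ^ n → ∃ c : k, c ≠ 0 ∧ v f = va c := by
      intro a b m n ha hb hmn heq
      set e : ℕ := n - m with he
      have hne : n = m + e := by omega
      have he0 : 0 < e := by omega
      have h1 : va a * v f ^ m = va b * v f ^ e * v f ^ m := by
        rw [heq, hne, pow_add]; ring
      have h2 : va a = va b * v f ^ e :=
        mul_right_cancel₀ (pow_ne_zero m (ne_of_gt hvf)) h1
      obtain ⟨d, hd⟩ := IsAlgClosed.exists_pow_nat_eq (a / b) he0
      have h3 : va d ^ e = v f ^ e := by
        rw [← map_pow, hd, map_div₀, h2, mul_comm, mul_div_assoc,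
          div_self (ne_of_gt (va.pos hb)), mul_one]
      have h4 : va d = v f := by
        by_contra hne'
        rcases lt_or_gt_of_ne hne' with hlt|hlt
        · exact absurd h3 (ne_of_lt (pow_lt_pow_left₀ hlt (va.nonneg d) (by omega)))
        · exact absurd h3.symm (ne_of_lt (pow_lt_pow_left₀ hlt (le_of_lt hvf) (by omega)))
      refine ⟨d, ?_, h4.symm⟩
      intro hd0
      rw [hd0, map_zero] at h4
      exact ne_of_gt hvf h4.symm
    obtain ⟨P, hP0, hPev⟩ := hfalg f
    set t : ℕ → F := fun i => ((P.coeff i : F)) * f ^ i with ht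
    have hsum : ∑ i ∈ P.support, t i = 0 := by
      have h1 : Polynomial.aeval f P
          = ∑ i ∈ P.support, ((algebraMap K' F) (P.coeff i)) * f ^ i := by
        rw [Polynomial.aeval_def, Polynomial.eval₂_eq_sum, Polynomial.sum_def]
      rw [← hPev, h1]
      rfl
    have ht0 : ∀ i ∈ P.support, t i ≠ 0 := by
      intro i hi
      refine mul_ne_zero ?_ (pow_ne_zero _ hf0)
      exact_mod_cast Polynomial.mem_support_iff.mp hi
    have hnd : ¬ (∀ i ∈ P.support, ∀ j ∈ P.support, i ≠ j → v (t i) ≠ v (t j)) := by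
      intro hd
      exact sum_ne_zero_of_distinct_vals hv (Polynomial.support_nonempty.mpr hP0) t ht0 hd hsum
    push_neg at hnd
    obtain ⟨i, hi, j, hj, hij, hvij⟩ := hnd
    obtain ⟨ci, hci0, hci⟩ := hK'val (P.coeff i : F) (P.coeff i).2
      (by exact_mod_cast Polynomial.mem_support_iff.mp hi)
    obtain ⟨cj, hcj0, hcj⟩ := hK'val (P.coeff j : F) (P.coeff j).2
      (by exact_mod_cast Polynomial.mem_support_iff.mp hj)
    have hveq : va ci * v f ^ i = va cj * v f ^ j := by
      have h1 : v (t i) = va ci * v f ^ i := by rw [ht]; rw [v.map_mul, v.map_pow, hci]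
      have h2 : v (t j) = va cj * v f ^ j := by rw [ht]; rw [v.map_mul, v.map_pow, hcj]
      rw [← h1, ← h2, hvij]
    rcases lt_or_gt_of_ne hij with h|h
    · exact hcase ci cj i j hci0 hcj0 h hveq
    · exact hcase cj ci j i hcj0 hci0 h hveq.symm
  -- conclude
  ext τ
  simp only [Set.mem_setOf_eq]
  constructor
  · rintro ⟨f, hf0, rfl⟩
    obtain ⟨c, hc0, hc⟩ := main f hf0
    exact ⟨c, hc0, hc.symm⟩
  · rintro ⟨c, hc0, rfl⟩
    refine ⟨algebraMap k F c, ?_, hvk c⟩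
    intro h0
    exact hc0 ((algebraMap k F).injective (by rw [h0, map_zero]))

end
end

section
/- Let k be a field equipped with a nonarchimedean absolute value |·| and let r > 0 be a real number. Then the Gauss norm N_r on the polynomial ring k[T], defined by N_r(Σ_i a_i T^i) = max_i |a_i| r^i, is multiplicative: N_r(fg) = N_r(f)·N_r(g) for all f, g ∈ k[T]; moreover N_r(f+g) ≤ max(N_r(f), N_r(g)), N_r(c) = |c| for every constant c ∈ k, and N_r(f) = 0 only if f = 0. -/
noncomputable section

/-- The Gauss norm `N_r(Σ aᵢ Tⁱ) = max_i |aᵢ| rⁱ` on the polynomial ring `k[T]`. -/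
def gaussNorm {k : Type*} [Field k] (va : AbsoluteValue k ℝ) (r : ℝ)
    (f : Polynomial k) : ℝ :=
  ⨆ i : ℕ, va (f.coeff i) * r ^ i

/-- The supremum `sup_{y ∈ B(a,r)} |f(y)|` of `|f|` over the closed ball `B(a,r)`. -/
def supBall {k : Type*} [Field k] (va : AbsoluteValue k ℝ) (a : k) (r : ℝ)
    (f : Polynomial k) : ℝ :=
  sSup ((fun y => va (Polynomial.eval y f)) '' {y : k | va (y - a) ≤ r})

namespace GaussAux

variable {k : Type*} [Field k] (va : AbsoluteValue k ℝ) (r : ℝ)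

lemma na_sum (hna : IsNA va) {ι : Type*} (s : Finset ι) (x : ι → k) {B : ℝ}
    (hB : 0 ≤ B) (h : ∀ i ∈ s, va (x i) ≤ B) : va (∑ i ∈ s, x i) ≤ B := by
  classical
  induction s using Finset.induction_on with
  | empty => simpa using hB
  | @insert a s ha ih =>
    rw [Finset.sum_insert ha]
    exact le_trans (hna _ _)
      (max_le (h a (by simp)) (ih fun i hi => h i (by simp [hi])))

lemma na_add_eq (hna : IsNA va) {x y : k} (h : va y < va x) : va (x + y) = va x := by
  refine le_antisymm (le_trans (hna x y) (max_le le_rfl h.le)) ?_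
  have h2 : va x ≤ max (va (x + y)) (va y) := by
    have := hna (x + y) (-y)
    simpa [map_neg] using this
  rcases le_max_iff.mp h2 with h' | h'
  · exact h'
  · exact absurd h' (not_le.mpr h)

variable (hr : 0 < r)
include hr

lemma gn_bdd (f : Polynomial k) :
    BddAbove (Set.range fun i => va (f.coeff i) * r ^ i) := by
  refine ⟨∑ j ∈ Finset.range (f.natDegree + 1), va (f.coeff j) * r ^ j, ?_⟩
  rintro _ ⟨i, rfl⟩
  dsimp only
  by_cases hi : i ≤ f.natDegree
  · exact Finset.single_le_sum (f := fun j => va (f.coeff j) * r ^ j)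
      (fun j _ => mul_nonneg (va.nonneg _) (pow_nonneg hr.le _))
      (Finset.mem_range.mpr (by omega))
  · rw [Polynomial.coeff_eq_zero_of_natDegree_lt (by omega)]
    simp only [map_zero, zero_mul]
    exact Finset.sum_nonneg fun j _ => mul_nonneg (va.nonneg _) (pow_nonneg hr.le _)

lemma term_le (f : Polynomial k) (i : ℕ) : va (f.coeff i) * r ^ i ≤ gaussNorm va r f :=
  le_ciSup (gn_bdd va r hr f) i

lemma gn_nonneg (f : Polynomial k) : 0 ≤ gaussNorm va r f :=
  le_trans (mul_nonneg (va.nonneg _) (pow_nonneg hr.le 0)) (term_le va r hr f 0)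

omit hr in
lemma gn_le (f : Polynomial k) {B : ℝ} (h : ∀ i, va (f.coeff i) * r ^ i ≤ B) :
    gaussNorm va r f ≤ B := ciSup_le h

lemma gn_eq_sup' (f : Polynomial k) :
    gaussNorm va r f = (Finset.range (f.natDegree + 1)).sup' ⟨0, by simp⟩
      (fun i => va (f.coeff i) * r ^ i) := by
  apply le_antisymm
  · apply ciSup_le
    intro i
    by_cases hi : i ≤ f.natDegree
    · exact Finset.le_sup' (fun j => va (f.coeff j) * r ^ j)
        (Finset.mem_range.mpr (by omega))
    · rw [Polynomial.coeff_eq_zero_of_natDegree_lt (by omega)]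
      simp only [map_zero, zero_mul]
      exact le_trans (mul_nonneg (va.nonneg _) (pow_nonneg hr.le 0))
        (Finset.le_sup' (fun j => va (f.coeff j) * r ^ j) (by simp))
  · exact Finset.sup'_le _ _ fun i _ => term_le va r hr f i

lemma gn_exists_min (f : Polynomial k) :
    ∃ i₀, va (f.coeff i₀) * r ^ i₀ = gaussNorm va r f ∧
      ∀ i < i₀, va (f.coeff i) * r ^ i < gaussNorm va r f := by
  have hex : ∃ i, va (f.coeff i) * r ^ i = gaussNorm va r f := by
    obtain ⟨i, hi, hieq⟩ := Finset.exists_mem_eq_sup' (⟨0, by simp⟩ :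
      (Finset.range (f.natDegree + 1)).Nonempty) (fun i => va (f.coeff i) * r ^ i)
    exact ⟨i, by rw [gn_eq_sup' va r hr f, hieq]⟩
  refine ⟨Nat.find hex, Nat.find_spec hex, fun i hi => ?_⟩
  exact lt_of_le_of_ne (term_le va r hr f i) (Nat.find_min hex hi)

lemma gn_pos {f : Polynomial k} (hf : f ≠ 0) : 0 < gaussNorm va r f :=
  lt_of_lt_of_le
    (mul_pos (va.pos (Polynomial.leadingCoeff_ne_zero.mpr hf)) (pow_pos hr _))
    (term_le va r hr f f.natDegree)

omit hr in
lemma gn_zero : gaussNorm va r (0 : Polynomial k) = 0 := by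
  simp [gaussNorm, ciSup_const]

end GaussAux

open GaussAux in
set_option maxHeartbeats 1600000 in
/-- Let `k` be a field with a nonarchimedean absolute value `va` and
`r > 0` a real number.  Then the Gauss norm `N_r` on `k[T]` is multiplicative:
`N_r (f g) = N_r f * N_r g`; moreover `N_r (f + g) ≤ max (N_r f) (N_r g)`,
`N_r c = |c|` for every constant `c ∈ k`, and `N_r f = 0` only if `f = 0`. -/
theorem statement4 {k : Type*} [Field k] (va : AbsoluteValue k ℝ) (hna : IsNA va)
    (r : ℝ) (hr : 0 < r) :
    (∀ f g : Polynomial k, gaussNorm va r (f * g) = gaussNorm va r f * gaussNorm va r g) ∧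
    (∀ f g : Polynomial k, gaussNorm va r (f + g) ≤ max (gaussNorm va r f) (gaussNorm va r g)) ∧
    (∀ c : k, gaussNorm va r (Polynomial.C c) = va c) ∧
    (∀ f : Polynomial k, gaussNorm va r f = 0 → f = 0) := by
  refine ⟨?_, ?_, ?_, ?_⟩
  · -- multiplicativity
    intro f g
    by_cases hf : f = 0
    · simp [hf, gn_zero va r]
    by_cases hg : g = 0
    · simp [hg, gn_zero va r]
    have hF := gn_pos va r hr hf
    have hG := gn_pos va r hr hg
    apply le_antisymm
    · -- upper bound
      apply gn_le va r
      intro n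
      rw [Polynomial.coeff_mul]
      have hrn : (0:ℝ) < r ^ n := pow_pos hr n
      rw [← le_div_iff₀ hrn]
      apply na_sum va hna
      · exact div_nonneg (mul_nonneg (gn_nonneg va r hr f) (gn_nonneg va r hr g)) hrn.le
      · rintro ⟨i, j⟩ hij
        rw [Finset.HasAntidiagonal.mem_antidiagonal] at hij
        rw [le_div_iff₀ hrn, map_mul, ← hij, pow_add]
        calc va (f.coeff i) * va (g.coeff j) * (r ^ i * r ^ j)
            = (va (f.coeff i) * r ^ i) * (va (g.coeff j) * r ^ j) := by ring
          _ ≤ gaussNorm va r f * gaussNorm va r g :=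
            mul_le_mul (term_le va r hr f i) (term_le va r hr g j)
              (mul_nonneg (va.nonneg _) (pow_nonneg hr.le _)) (gn_nonneg va r hr f)
    · -- lower bound
      obtain ⟨i₀, hi₀, hi₀min⟩ := gn_exists_min va r hr f
      obtain ⟨j₀, hj₀, hj₀min⟩ := gn_exists_min va r hr g
      set S := i₀ + j₀ with hS
      have hrS : (0:ℝ) < r ^ S := pow_pos hr S
      have hmem : ((i₀, j₀) : ℕ × ℕ) ∈ Finset.HasAntidiagonal.antidiagonal S :=
        Finset.HasAntidiagonal.mem_antidiagonal.mpr rfl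
      -- all other terms are strictly smaller
      have hother : ∀ p ∈ (Finset.HasAntidiagonal.antidiagonal S).erase (i₀, j₀),
          va (f.coeff p.1 * g.coeff p.2) * r ^ S <
            gaussNorm va r f * gaussNorm va r g := by
        rintro ⟨i, j⟩ hp
        obtain ⟨hne, hij⟩ := Finset.mem_erase.mp hp
        rw [Finset.HasAntidiagonal.mem_antidiagonal] at hij
        rw [map_mul, ← hij, pow_add]
        have hterm : va (f.coeff i) * va (g.coeff j) * (r ^ i * r ^ j)
            = (va (f.coeff i) * r ^ i) * (va (g.coeff j) * r ^ j) := by ring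
        rw [hterm]
        rcases lt_trichotomy i i₀ with hlt | heq | hgt
        · calc (va (f.coeff i) * r ^ i) * (va (g.coeff j) * r ^ j)
              ≤ (va (f.coeff i) * r ^ i) * gaussNorm va r g :=
                mul_le_mul_of_nonneg_left (term_le va r hr g j)
                  (mul_nonneg (va.nonneg _) (pow_nonneg hr.le _))
            _ < gaussNorm va r f * gaussNorm va r g :=
                mul_lt_mul_of_pos_right (hi₀min i hlt) hG
        · exact absurd (by simp only [Prod.mk.injEq]; omega : (i, j) = (i₀, j₀)) hne
        · have hjlt : j < j₀ := by omega
          calc (va (f.coeff i) * r ^ i) * (va (g.coeff j) * r ^ j)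
              ≤ gaussNorm va r f * (va (g.coeff j) * r ^ j) :=
                mul_le_mul_of_nonneg_right (term_le va r hr f i)
                  (mul_nonneg (va.nonneg _) (pow_nonneg hr.le _))
            _ < gaussNorm va r f * gaussNorm va r g :=
                mul_lt_mul_of_pos_left (hj₀min j hjlt) hF
      -- the main term
      have hmain : va (f.coeff i₀ * g.coeff j₀) * r ^ S
          = gaussNorm va r f * gaussNorm va r g := by
        rw [map_mul, hS, pow_add, ← hi₀, ← hj₀]; ring
      -- value of the coefficient at S
      have hcoeff : va ((f * g).coeff S) * r ^ S
          = gaussNorm va r f * gaussNorm va r g := by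
        rw [Polynomial.coeff_mul,
          ← Finset.add_sum_erase _ _ hmem]
        set rest := ∑ p ∈ (Finset.HasAntidiagonal.antidiagonal S).erase (i₀, j₀),
          f.coeff p.1 * g.coeff p.2 with hrest
        have hrestlt : va rest < va (f.coeff i₀ * g.coeff j₀) := by
          rcases eq_or_ne ((Finset.HasAntidiagonal.antidiagonal S).erase (i₀, j₀)) ∅ with he | he
          · rw [hrest, he]
            simp only [Finset.sum_empty, map_zero]
            have := hmain
            nlinarith [mul_pos hF hG]
          · obtain ⟨q, hq⟩ := Finset.nonempty_iff_ne_empty.mpr he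
            have hB : va rest ≤ ((Finset.HasAntidiagonal.antidiagonal S).erase (i₀, j₀)).sup'
                ⟨q, hq⟩ (fun p => va (f.coeff p.1 * g.coeff p.2)) := by
              apply na_sum va hna
              · exact le_trans (va.nonneg _)
                  (Finset.le_sup' (fun p => va (f.coeff p.1 * g.coeff p.2)) hq)
              · intro p hp
                exact Finset.le_sup' (fun p => va (f.coeff p.1 * g.coeff p.2)) hp
            obtain ⟨p, hp, hpeq⟩ := Finset.exists_mem_eq_sup'
              (⟨q, hq⟩ : ((Finset.HasAntidiagonal.antidiagonal S).erase (i₀, j₀)).Nonempty)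
              (fun p => va (f.coeff p.1 * g.coeff p.2))
            rw [hpeq] at hB
            refine lt_of_le_of_lt hB ?_
            have h1 := hother p hp
            rw [← hmain] at h1
            exact lt_of_mul_lt_mul_right h1 hrS.le
        rw [na_add_eq va hna hrestlt, ← hmain]
      rw [← hcoeff]
      exact term_le va r hr (f * g) S
  · -- ultrametric inequality
    intro f g
    apply gn_le va r
    intro i
    rw [Polynomial.coeff_add]
    calc va (f.coeff i + g.coeff i) * r ^ i
        ≤ max (va (f.coeff i)) (va (g.coeff i)) * r ^ i :=
          mul_le_mul_of_nonneg_right (hna _ _) (pow_nonneg hr.le _)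
      _ = max (va (f.coeff i) * r ^ i) (va (g.coeff i) * r ^ i) :=
          (max_mul_of_nonneg _ _ (pow_nonneg hr.le _))
      _ ≤ max (gaussNorm va r f) (gaussNorm va r g) :=
          max_le_max (term_le va r hr f i) (term_le va r hr g i)
  · -- constants
    intro c
    apply le_antisymm
    · apply gn_le va r
      intro i
      cases i with
      | zero => simp
      | succ n => simp [Polynomial.coeff_C]
    · have := term_le va r hr (Polynomial.C c) 0
      simpa using this
  · -- norm zero implies zero
    intro f hf0
    by_contra hf
    exact absurd hf0 (ne_of_gt (gn_pos va r hr hf))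

end
end

section
/- Let k be an algebraically closed field complete with respect to a nontrivial nonarchimedean absolute value |·|, and let (B(a_j, r_j))_{j ∈ J} be a nonempty family of closed balls in k that is totally ordered by inclusion (a nested family). Then the function N on the polynomial ring k[T] defined by N(f) = inf_j sup_{y ∈ B(a_j,r_j)} |f(y)| is a multiplicative seminorm on k[T] extending |·|: N(fg) = N(f)·N(g), N(f+g) ≤ max(N(f), N(g)), and N(c) = |c| for every constant c ∈ k. -/
noncomputable section

open Polynomial

section Aux
variable {k : Type*} [Field k]

/-- multiset product of nonneg reals pointwise le -/
lemma myprod_le {α : Type*} (m : Multiset α) (f g : α → ℝ)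
    (h0 : ∀ x ∈ m, 0 ≤ f x) (h : ∀ x ∈ m, f x ≤ g x) :
    (m.map f).prod ≤ (m.map g).prod := by
  induction m using Multiset.induction with
  | empty => simp
  | cons a s ih =>
    simp only [Multiset.map_cons, Multiset.prod_cons]
    have h0s : ∀ x ∈ s, 0 ≤ f x := fun x hx => h0 x (Multiset.mem_cons_of_mem hx)
    have hps : 0 ≤ (s.map f).prod :=
      Multiset.prod_nonneg (by simpa using fun x hx => h0s x hx)
    have h0a : 0 ≤ f a := h0 a (Multiset.mem_cons_self a s)
    exact mul_le_mul (h a (Multiset.mem_cons_self a s))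
      (ih h0s (fun x hx => h x (Multiset.mem_cons_of_mem hx))) hps
      (le_trans h0a (h a (Multiset.mem_cons_self a s)))

lemma myprod_nonneg {α : Type*} (m : Multiset α) (f : α → ℝ)
    (h0 : ∀ x ∈ m, 0 ≤ f x) : 0 ≤ (m.map f).prod :=
  Multiset.prod_nonneg (by simpa using h0)

lemma myprod_pos {α : Type*} (m : Multiset α) (f : α → ℝ)
    (h0 : ∀ x ∈ m, 0 < f x) : 0 < (m.map f).prod := by
  induction m using Multiset.induction with
  | empty => simp
  | cons a s ih =>
    simp only [Multiset.map_cons, Multiset.prod_cons]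
    exact mul_pos (h0 a (Multiset.mem_cons_self a s))
      (ih (fun x hx => h0 x (Multiset.mem_cons_of_mem hx)))

lemma myprod_const_mul {α : Type*} (c : ℝ) (m : Multiset α) (h : α → ℝ) :
    (m.map (fun x => c * h x)).prod = c ^ Multiset.card m * (m.map h).prod := by
  induction m using Multiset.induction with
  | empty => simp
  | cons a s ih =>
    simp only [Multiset.map_cons, Multiset.prod_cons, ih, Multiset.card_cons, pow_succ]
    ring

variable (va : AbsoluteValue k ℝ)

lemma na_sub_le (hna : IsNA va) (x y : k) : va (x - y) ≤ max (va x) (va y) := by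
  rw [sub_eq_add_neg]
  simpa using hna x (-y)

lemma na_add_eq (hna : IsNA va) {x y : k} (h : va y < va x) : va (x + y) = va x := by
  refine le_antisymm (le_trans (hna x y) (by simp [le_of_lt h])) ?_
  have h2 : va x ≤ max (va (x + y)) (va y) := by
    simpa using na_sub_le va hna (x + y) y
  rcases le_max_iff.1 h2 with h3 | h3
  · exact h3
  · exact absurd h3 (not_le.2 h)

/-- factorization of eval over an algebraically closed field -/
lemma eval_eq_prod [IsAlgClosed k] (f : k[X]) (y : k) (hf : f ≠ 0) :
    va (f.eval y) = va f.leadingCoeff * ((f.roots).map (fun ρ => va (y - ρ))).prod := by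
  have : f.eval y = f.leadingCoeff * ((f.roots).map (fun ρ => y - ρ)).prod := by
    conv_lhs => rw [Polynomial.Splits.eq_prod_roots (IsAlgClosed.splits f)]
    simp [Polynomial.eval_multiset_prod, Multiset.map_map, Function.comp]
  rw [this, map_mul, map_multiset_prod, Multiset.map_map, Function.comp_def]

/-- `Mball`: the predicted sup norm -/
def Mball (a : k) (r : ℝ) (f : k[X]) : ℝ :=
  va f.leadingCoeff * ((f.roots).map (fun ρ => max r (va (ρ - a)))).prod

lemma Mball_nonneg (a : k) {r : ℝ} (hr : 0 ≤ r) (f : k[X]) : 0 ≤ Mball va a r f :=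
  mul_nonneg (va.nonneg _) (myprod_nonneg _ _ (fun x _ => le_trans hr (le_max_left _ _)))

lemma Mball_pos (a : k) {r : ℝ} (hr : 0 < r) {f : k[X]} (hf : f ≠ 0) :
    0 < Mball va a r f :=
  mul_pos (va.pos (Polynomial.leadingCoeff_ne_zero.2 hf))
    (myprod_pos _ _ (fun x _ => lt_of_lt_of_le hr (le_max_left _ _)))

lemma Mball_mul [IsAlgClosed k] (a : k) (r : ℝ) {f g : k[X]} (hf : f ≠ 0) (hg : g ≠ 0) :
    Mball va a r (f * g) = Mball va a r f * Mball va a r g := by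
  unfold Mball
  rw [Polynomial.leadingCoeff_mul, map_mul,
    Polynomial.roots_mul (mul_ne_zero hf hg), Multiset.map_add, Multiset.prod_add]
  ring

/-- pointwise upper bound on the ball -/
lemma eval_le_Mball [IsAlgClosed k] (hna : IsNA va) (a : k) {r : ℝ} (hr : 0 ≤ r)
    {f : k[X]} (hf : f ≠ 0) {y : k} (hy : va (y - a) ≤ r) :
    va (f.eval y) ≤ Mball va a r f := by
  rw [eval_eq_prod va f y hf]
  unfold Mball
  refine mul_le_mul_of_nonneg_left ?_ (va.nonneg _)
  refine myprod_le _ _ _ (fun x _ => va.nonneg _) (fun ρ _ => ?_)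
  have : y - ρ = (y - a) - (ρ - a) := by ring
  rw [this]
  refine le_trans (na_sub_le va hna _ _) (max_le_max hy le_rfl)

/-- density of the value group of a nontrivially valued alg. closed field -/
lemma exists_va_ioo [IsAlgClosed k] (hnt : ∃ c : k, c ≠ 0 ∧ va c ≠ 1)
    {u v : ℝ} (hu : 0 < u) (huv : u < v) : ∃ t : k, t ≠ 0 ∧ u < va t ∧ va t < v := by
  -- get c with va c > 1
  obtain ⟨c0, hc0, hvc0⟩ := hnt
  have hvc0' : 0 < va c0 := va.pos hc0
  obtain ⟨c, hc, hvc⟩ : ∃ c : k, c ≠ 0 ∧ 1 < va c := by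
    rcases lt_or_gt_of_ne hvc0 with h | h
    · exact ⟨c0⁻¹, inv_ne_zero hc0, by rw [map_inv₀]; exact (one_lt_inv₀ hvc0').2 h⟩
    · exact ⟨c0, hc0, h⟩
  have hvu : 1 < v / u := (one_lt_div hu).2 huv
  -- choose m with (va c)^2 < (v/u)^m
  obtain ⟨m0, hm0⟩ := pow_unbounded_of_one_lt ((va c) ^ 2) hvu
  set m := m0 + 1 with hm
  have hm1 : 0 < m := Nat.succ_pos _
  have hmm : (va c) ^ 2 < (v / u) ^ m :=
    lt_of_lt_of_le hm0 (pow_le_pow_right₀ (le_of_lt hvu) (Nat.le_succ _))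
  -- m-th root of c
  obtain ⟨d, hd⟩ := IsAlgClosed.exists_root ((X : k[X]) ^ m - C c)
    (by rw [Polynomial.degree_X_pow_sub_C hm1 c]; exact_mod_cast hm1.ne')
  have hdm : d ^ m = c := by
    have := hd
    simp only [Polynomial.IsRoot, Polynomial.eval_sub, Polynomial.eval_pow,
      Polynomial.eval_X, Polynomial.eval_C, sub_eq_zero] at this
    exact this
  have hd0 : d ≠ 0 := by
    intro h; apply hc; rw [← hdm, h, zero_pow hm1.ne']
  set θ := va d with hθdef
  have hθm : θ ^ m = va c := by rw [hθdef, ← map_pow, hdm]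
  have hθ1 : 1 < θ := by
    by_contra h
    push_neg at h
    have : θ ^ m ≤ 1 := pow_le_one₀ (va.nonneg d) h
    rw [hθm] at this; linarith
  have hθ0 : 0 < θ := lt_trans one_pos hθ1
  have hθ2 : θ ^ 2 < v / u := by
    have h1 : (θ ^ 2) ^ m < (v / u) ^ m := by
      rw [← pow_mul, mul_comm, pow_mul, hθm]; exact hmm
    exact lt_of_pow_lt_pow_left₀ m (le_of_lt (div_pos (lt_trans hu huv) hu)) h1
  -- locate u between zpowers of θ
  obtain ⟨z, hz1, hz2⟩ := exists_mem_Ioc_zpow hu hθ1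
  refine ⟨d ^ (z + 2), zpow_ne_zero _ hd0, ?_, ?_⟩ <;>
    rw [map_zpow₀ va d, ← hθdef]
  · calc u < θ * u := by nlinarith
      _ ≤ θ * θ ^ (z + 1) := by nlinarith [zpow_pos hθ0 (z+1)]
      _ = θ ^ (z + 2) := by
        rw [zpow_add₀ (ne_of_gt hθ0), zpow_add₀ (ne_of_gt hθ0), zpow_one,
          show ((2:ℤ) = ((2:ℕ):ℤ)) by norm_num, zpow_natCast]
        ring
  · have hsplit : θ ^ (z + 2) = θ ^ 2 * θ ^ z := by
      rw [zpow_add₀ (ne_of_gt hθ0), show ((2:ℤ) = ((2:ℕ):ℤ)) by norm_num, zpow_natCast]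
      ring
    calc θ ^ (z + 2) = θ ^ 2 * θ ^ z := hsplit
      _ < θ ^ 2 * u := mul_lt_mul_of_pos_left hz1 (pow_pos hθ0 2)
      _ < (v / u) * u := mul_lt_mul_of_pos_right hθ2 hu
      _ = v := div_mul_cancel₀ v (ne_of_gt hu)


lemma mem_ball_self (a : k) {r : ℝ} (hr : 0 ≤ r) : a ∈ {y : k | va (y - a) ≤ r} := by
  simp [Set.mem_setOf_eq, sub_self, hr]

lemma supBall_bddAbove [IsAlgClosed k] (hna : IsNA va) (a : k) {r : ℝ} (hr : 0 ≤ r)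
    (f : k[X]) : BddAbove ((fun y => va (Polynomial.eval y f)) '' {y : k | va (y - a) ≤ r}) := by
  by_cases hf : f = 0
  · refine ⟨0, ?_⟩
    rintro x ⟨y, _, rfl⟩
    simp [hf]
  · refine ⟨Mball va a r f, ?_⟩
    rintro x ⟨y, hy, rfl⟩
    exact eval_le_Mball va hna a hr hf hy

lemma va_eval_le_supBall [IsAlgClosed k] (hna : IsNA va) (a : k) {r : ℝ} (hr : 0 ≤ r)
    (f : k[X]) {y : k} (hy : va (y - a) ≤ r) :
    va (Polynomial.eval y f) ≤ supBall va a r f :=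
  le_csSup (supBall_bddAbove va hna a hr f) (Set.mem_image_of_mem _ hy)

lemma supBall_nonneg [IsAlgClosed k] (hna : IsNA va) (a : k) {r : ℝ} (hr : 0 ≤ r)
    (f : k[X]) : 0 ≤ supBall va a r f :=
  le_trans (va.nonneg _) (va_eval_le_supBall va hna a hr f (mem_ball_self va a hr))

lemma supBall_le (a : k) {r : ℝ} (hr : 0 ≤ r) (f : k[X]) {B : ℝ}
    (h : ∀ y : k, va (y - a) ≤ r → va (Polynomial.eval y f) ≤ B) :
    supBall va a r f ≤ B := by
  refine csSup_le (Set.Nonempty.image _ ⟨a, mem_ball_self va a hr⟩) ?_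
  rintro x ⟨y, hy, rfl⟩
  exact h y hy

lemma supBall_mono [IsAlgClosed k] (hna : IsNA va) {a₁ a₂ : k} {r₁ r₂ : ℝ}
    (hr₁ : 0 ≤ r₁) (hr₂ : 0 ≤ r₂)
    (hsub : {y : k | va (y - a₁) ≤ r₁} ⊆ {y : k | va (y - a₂) ≤ r₂}) (f : k[X]) :
    supBall va a₁ r₁ f ≤ supBall va a₂ r₂ f :=
  csSup_le_csSup (supBall_bddAbove va hna a₂ hr₂ f)
    (Set.Nonempty.image _ ⟨a₁, mem_ball_self va a₁ hr₁⟩) (Set.image_mono hsub)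

lemma supBall_C (a : k) {r : ℝ} (hr : 0 ≤ r) (c : k) :
    supBall va a r (Polynomial.C c) = va c := by
  unfold supBall
  have h1 : (fun y : k => va (Polynomial.eval y (Polynomial.C c))) = fun _ => va c := by
    funext y; simp
  rw [h1, Set.Nonempty.image_const ⟨a, mem_ball_self va a hr⟩, csSup_singleton]

lemma supBall_zero (a : k) {r : ℝ} (hr : 0 ≤ r) : supBall va a r 0 = 0 := by
  rw [← Polynomial.C_0, supBall_C va a hr, map_zero]

lemma supBall_eq_Mball [IsAlgClosed k] (hna : IsNA va) (hnt : ∃ c : k, c ≠ 0 ∧ va c ≠ 1)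
    (a : k) {r : ℝ} (hr : 0 ≤ r) {f : k[X]} (hf : f ≠ 0) :
    supBall va a r f = Mball va a r f := by
  refine le_antisymm (supBall_le va a hr f (fun y hy => eval_le_Mball va hna a hr hf hy)) ?_
  rcases eq_or_lt_of_le hr with hr0 | hr0
  · -- r = 0 case
    have hball : {y : k | va (y - a) ≤ r} = {a} := by
      ext y
      simp only [Set.mem_setOf_eq, Set.mem_singleton_iff]
      constructor
      · intro h
        have h0 : va (y - a) = 0 := le_antisymm (by rw [← hr0] at h; exact h) (va.nonneg _)
        exact sub_eq_zero.1 (va.eq_zero.1 h0)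
      · intro h; subst h; simp [sub_self, hr]
    have hsup : supBall va a r f = va (Polynomial.eval a f) := by
      unfold supBall
      rw [hball, Set.image_singleton, csSup_singleton]
    have hMb : Mball va a r f = va (Polynomial.eval a f) := by
      rw [eval_eq_prod va f a hf]
      unfold Mball
      congr 1
      refine congrArg Multiset.prod (Multiset.map_congr rfl (fun ρ _ => ?_))
      rw [← hr0, max_eq_right (va.nonneg _), show a - ρ = -(ρ - a) by ring, va.map_neg]
    rw [hsup, hMb]
  · -- 0 < r case
    refine le_of_forall_pos_le_add (fun ε hε => ?_)
    set n := Multiset.card f.roots with hn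
    set M := Mball va a r f with hMdef
    have hM : 0 < M := Mball_pos va a hr0 hf
    set δ : ℝ := min (1/2) (ε / ((n+1) * M)) with hδdef
    have hδ0 : 0 < δ := lt_min (by norm_num) (div_pos hε (mul_pos (by positivity) hM))
    have hδhalf : δ ≤ 1/2 := min_le_left _ _
    -- the threshold L
    classical
    set W : Finset ℝ := (f.roots.map (fun ρ => va (ρ - a))).toFinset.filter (· < r) with hWdef
    set L : ℝ := (insert (r * (1 - δ)) W).sup' (Finset.insert_nonempty _ _) id with hLdef
    have hL1 : L < r := by
      rw [hLdef, Finset.sup'_lt_iff]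
      intro x hx
      rcases Finset.mem_insert.1 hx with h | h
      · rw [h]; simp only [id]; nlinarith
      · exact (Finset.mem_filter.1 h).2
    have hL2 : r * (1 - δ) ≤ L := Finset.le_sup' id (Finset.mem_insert_self _ _)
    have hL3 : ∀ x ∈ W, x ≤ L := fun x hx => Finset.le_sup' id (Finset.mem_insert_of_mem hx)
    have hL0 : 0 < L := lt_of_lt_of_le (by nlinarith) hL2
    obtain ⟨t, ht0, hts1, hts2⟩ := exists_va_ioo va hnt hL0 hL1
    set s := va t with hsdef
    have hs0 : 0 < s := lt_trans hL0 hts1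
    set y := a + t with hydef
    have hyball : va (y - a) ≤ r := by
      rw [hydef, add_sub_cancel_left]; exact le_of_lt hts2
    have hfac : ∀ ρ ∈ f.roots, (s / r) * max r (va (ρ - a)) ≤ va (y - ρ) := by
      intro ρ hρ
      have hyρ : y - ρ = t + (-(ρ - a)) := by rw [hydef]; ring
      have hwneg : va (-(ρ - a)) = va (ρ - a) := va.map_neg _
      rcases lt_or_ge (va (ρ - a)) r with hcase | hcase
      · have hwW : va (ρ - a) ∈ W := by
          rw [hWdef]
          refine Finset.mem_filter.2 ⟨Multiset.mem_toFinset.2 ?_, hcase⟩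
          exact Multiset.mem_map_of_mem _ hρ
        have hws : va (ρ - a) < s := lt_of_le_of_lt (hL3 _ hwW) hts1
        have heq : va (y - ρ) = s := by
          rw [hyρ]; exact na_add_eq va hna (by rw [hwneg]; exact hws)
        rw [heq, max_eq_left (le_of_lt hcase)]
        rw [div_mul_cancel₀ _ (ne_of_gt hr0)]
      · have hsw : s < va (ρ - a) := lt_of_lt_of_le hts2 hcase
        have heq : va (y - ρ) = va (ρ - a) := by
          rw [hyρ, add_comm, ← hwneg]
          exact na_add_eq va hna (by rw [hwneg]; exact hsw)
        rw [heq, max_eq_right hcase]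
        have h1 : s / r ≤ 1 := le_of_lt ((div_lt_one hr0).2 hts2)
        nlinarith [va.nonneg (ρ - a)]
    have heval : (s / r) ^ n * M ≤ va (Polynomial.eval y f) := by
      rw [eval_eq_prod va f y hf]
      have h1 : ((f.roots).map (fun ρ => (s/r) * max r (va (ρ - a)))).prod ≤
          ((f.roots).map (fun ρ => va (y - ρ))).prod := by
        refine myprod_le _ _ _ (fun ρ _ => ?_) hfac
        exact mul_nonneg (div_nonneg (le_of_lt hs0) hr) (le_trans hr (le_max_left _ _))
      rw [myprod_const_mul] at h1
      calc (s / r) ^ n * M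
          = va f.leadingCoeff *
            ((s/r) ^ Multiset.card f.roots *
              ((f.roots).map (fun ρ => max r (va (ρ - a)))).prod) := by
            rw [hMdef]; unfold Mball; rw [← hn]; ring
        _ ≤ va f.leadingCoeff * ((f.roots).map (fun ρ => va (y - ρ))).prod :=
            mul_le_mul_of_nonneg_left h1 (va.nonneg _)
    have hsr : 1 - δ ≤ s / r := by
      rw [le_div_iff₀ hr0]
      calc (1 - δ) * r = r * (1 - δ) := by ring
        _ ≤ L := hL2
        _ ≤ s := le_of_lt hts1
    have hpow : 1 - (n : ℝ) * δ ≤ (s / r) ^ n := by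
      have hb : (-2 : ℝ) ≤ s / r - 1 := by
        have : 0 < s / r := div_pos hs0 hr0
        linarith
      have h2 : 1 + (n : ℝ) * (s / r - 1) ≤ (1 + (s / r - 1)) ^ n := one_add_mul_le_pow hb n
      have h3 : 1 - (n : ℝ) * δ ≤ 1 + (n : ℝ) * (s / r - 1) := by
        have : -δ ≤ s / r - 1 := by linarith
        nlinarith [Nat.cast_nonneg (α := ℝ) n]
      calc 1 - (n : ℝ) * δ ≤ 1 + (n : ℝ) * (s / r - 1) := h3
        _ ≤ (1 + (s / r - 1)) ^ n := h2
        _ = (s / r) ^ n := by ring_nf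
    have hδM : (n : ℝ) * δ * M ≤ ε := by
      have hδ2 : δ ≤ ε / ((n+1) * M) := min_le_right _ _
      have hpos : (0:ℝ) < (n+1) * M := mul_pos (by positivity) hM
      have h4 : ((n:ℝ)+1) * δ * M ≤ ((n:ℝ)+1) * (ε / ((n+1) * M)) * M := by
        have := mul_le_mul_of_nonneg_left hδ2 (by positivity : (0:ℝ) ≤ (n:ℝ)+1)
        exact mul_le_mul_of_nonneg_right this hM.le
      have h5 : ((n:ℝ)+1) * (ε / ((n+1) * M)) * M = ε := by
        field_simp
      nlinarith [hδ0, hM]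
    have hfinal : M - ε ≤ va (Polynomial.eval y f) := by
      have h2 : (1 - (n:ℝ) * δ) * M ≤ (s / r) ^ n * M :=
        mul_le_mul_of_nonneg_right hpow hM.le
      nlinarith [heval]
    have := va_eval_le_supBall va hna a hr f hyball
    linarith

lemma supBall_mul [IsAlgClosed k] (hna : IsNA va) (hnt : ∃ c : k, c ≠ 0 ∧ va c ≠ 1)
    (a : k) {r : ℝ} (hr : 0 ≤ r) (f g : k[X]) :
    supBall va a r (f * g) = supBall va a r f * supBall va a r g := by
  by_cases hf : f = 0
  · simp [hf, supBall_zero va a hr]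
  by_cases hg : g = 0
  · simp [hg, supBall_zero va a hr]
  rw [supBall_eq_Mball va hna hnt a hr hf, supBall_eq_Mball va hna hnt a hr hg,
    supBall_eq_Mball va hna hnt a hr (mul_ne_zero hf hg), Mball_mul va a r hf hg]

end Aux


lemma iInf_mul_of_directed {J : Type*} [Nonempty J] (F G : J → ℝ)
    (hF0 : ∀ j, 0 ≤ F j) (hG0 : ∀ j, 0 ≤ G j)
    (hdir : ∀ i j, ∃ l, F l ≤ F i ∧ G l ≤ G j) :
    (⨅ j, F j * G j) = (⨅ j, F j) * (⨅ j, G j) := by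
  have hbF : BddBelow (Set.range F) := ⟨0, by rintro x ⟨j, rfl⟩; exact hF0 j⟩
  have hbG : BddBelow (Set.range G) := ⟨0, by rintro x ⟨j, rfl⟩; exact hG0 j⟩
  have hbFG : BddBelow (Set.range fun j => F j * G j) :=
    ⟨0, by rintro x ⟨j, rfl⟩; exact mul_nonneg (hF0 j) (hG0 j)⟩
  set A := ⨅ j, F j with hA
  set B := ⨅ j, G j with hB
  have hA0 : 0 ≤ A := le_ciInf hF0
  have hB0 : 0 ≤ B := le_ciInf hG0
  refine le_antisymm ?_ ?_
  · refine le_of_forall_pos_le_add (fun ε hε => ?_)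
    set ε' := min 1 (ε / (A + B + 1)) with hε'def
    have hε'0 : 0 < ε' := lt_min one_pos (div_pos hε (by linarith))
    obtain ⟨i, hi⟩ := exists_lt_of_ciInf_lt (show (⨅ j, F j) < A + ε' by rw [← hA]; linarith)
    obtain ⟨j, hj⟩ := exists_lt_of_ciInf_lt (show (⨅ j, G j) < B + ε' by rw [← hB]; linarith)
    obtain ⟨l, hl1, hl2⟩ := hdir i j
    have h1 : (⨅ j, F j * G j) ≤ F l * G l := ciInf_le hbFG l
    have h2 : F l * G l ≤ (A + ε') * (B + ε') :=
      mul_le_mul (le_trans hl1 hi.le) (le_trans hl2 hj.le) (hG0 l) (by linarith)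
    have h3 : (A + ε') * (B + ε') ≤ A * B + ε := by
      have hε1 : ε' ≤ 1 := min_le_left _ _
      have hε2 : ε' ≤ ε / (A + B + 1) := min_le_right _ _
      have h4 : ε' * (A + B + 1) ≤ ε := by
        rw [le_div_iff₀ (by linarith : (0:ℝ) < A + B + 1)] at hε2
        exact hε2
      nlinarith
    linarith
  · exact le_ciInf (fun l => mul_le_mul (ciInf_le hbF l) (ciInf_le hbG l) hB0 (hF0 l))

lemma iInf_le_max_iInf {J : Type*} [Nonempty J] (H F G : J → ℝ)
    (hH0 : ∀ j, 0 ≤ H j)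
    (hH : ∀ j, H j ≤ max (F j) (G j))
    (hdir : ∀ i j, ∃ l, F l ≤ F i ∧ G l ≤ G j) :
    (⨅ j, H j) ≤ max (⨅ j, F j) (⨅ j, G j) := by
  have hbH : BddBelow (Set.range H) := ⟨0, by rintro x ⟨j, rfl⟩; exact hH0 j⟩
  refine le_of_forall_pos_le_add (fun ε hε => ?_)
  obtain ⟨i, hi⟩ := exists_lt_of_ciInf_lt (show (⨅ j, F j) < (⨅ j, F j) + ε by linarith)
  obtain ⟨j, hj⟩ := exists_lt_of_ciInf_lt (show (⨅ j, G j) < (⨅ j, G j) + ε by linarith)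
  obtain ⟨l, hl1, hl2⟩ := hdir i j
  calc (⨅ j, H j) ≤ H l := ciInf_le hbH l
    _ ≤ max (F l) (G l) := hH l
    _ ≤ max ((⨅ j, F j) + ε) ((⨅ j, G j) + ε) :=
        max_le_max (le_trans hl1 hi.le) (le_trans hl2 hj.le)
    _ = max (⨅ j, F j) (⨅ j, G j) + ε := max_add_add_right _ _ _

/-- Let `k` be an algebraically closed field, complete with respect to a
nontrivial nonarchimedean absolute value `va`, and let `(B(aⱼ, rⱼ))_{j ∈ J}` be a
nonempty family of closed balls in `k`, totally ordered by inclusion.  Then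
`N(f) = inf_j sup_{y ∈ B(aⱼ,rⱼ)} |f(y)|` is a multiplicative seminorm on `k[T]`
extending `va`. -/
theorem statement7 {k : Type*} [Field k] [IsAlgClosed k]
    (va : AbsoluteValue k ℝ) (hna : IsNA va)
    (hnt : ∃ c : k, c ≠ 0 ∧ va c ≠ 1) (hcomplete : SeqComplete va)
    {J : Type*} [Nonempty J] (a : J → k) (rr : J → ℝ) (hr : ∀ j, 0 ≤ rr j)
    (hnested : ∀ i j : J,
      {y : k | va (y - a i) ≤ rr i} ⊆ {y : k | va (y - a j) ≤ rr j} ∨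
      {y : k | va (y - a j) ≤ rr j} ⊆ {y : k | va (y - a i) ≤ rr i}) :
    (∀ f g : Polynomial k,
        (⨅ j, supBall va (a j) (rr j) (f * g)) =
          (⨅ j, supBall va (a j) (rr j) f) * (⨅ j, supBall va (a j) (rr j) g)) ∧
    (∀ f g : Polynomial k,
        (⨅ j, supBall va (a j) (rr j) (f + g)) ≤
          max (⨅ j, supBall va (a j) (rr j) f) (⨅ j, supBall va (a j) (rr j) g)) ∧
    (∀ c : k, (⨅ j, supBall va (a j) (rr j) (Polynomial.C c)) = va c) := by
  classical
  have hF0 : ∀ (f : Polynomial k) (j : J), 0 ≤ supBall va (a j) (rr j) f :=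
    fun f j => supBall_nonneg va hna (a j) (hr j) f
  have hmono : ∀ (f : Polynomial k) (i j : J),
      {y : k | va (y - a i) ≤ rr i} ⊆ {y : k | va (y - a j) ≤ rr j} →
      supBall va (a i) (rr i) f ≤ supBall va (a j) (rr j) f :=
    fun f i j hsub => supBall_mono va hna (hr i) (hr j) hsub f
  have hdir : ∀ (f g : Polynomial k) (i j : J), ∃ l,
      supBall va (a l) (rr l) f ≤ supBall va (a i) (rr i) f ∧
      supBall va (a l) (rr l) g ≤ supBall va (a j) (rr j) g := by
    intro f g i j
    rcases hnested i j with h | h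
    · exact ⟨i, le_refl _, hmono g i j h⟩
    · exact ⟨j, hmono f j i h, le_refl _⟩
  refine ⟨?_, ?_, ?_⟩
  · intro f g
    by_cases hf : f = 0
    · have h0 : ∀ j : J, supBall va (a j) (rr j) (0 : Polynomial k) = 0 :=
        fun j => supBall_zero va (a j) (hr j)
      simp [hf, h0, ciInf_const]
    by_cases hg : g = 0
    · have h0 : ∀ j : J, supBall va (a j) (rr j) (0 : Polynomial k) = 0 :=
        fun j => supBall_zero va (a j) (hr j)
      simp [hg, h0, ciInf_const]
    rw [iInf_congr (fun j => supBall_mul va hna hnt (a j) (hr j) f g)]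
    exact iInf_mul_of_directed _ _ (hF0 f) (hF0 g) (hdir f g)
  · intro f g
    refine iInf_le_max_iInf _ _ _ (hF0 (f + g)) (fun j => ?_) (hdir f g)
    refine supBall_le va (a j) (hr j) (f + g) (fun y hy => ?_)
    rw [Polynomial.eval_add]
    refine le_trans (hna _ _) (max_le_max ?_ ?_)
    · exact va_eval_le_supBall va hna (a j) (hr j) f hy
    · exact va_eval_le_supBall va hna (a j) (hr j) g hy
  · intro c
    rw [iInf_congr (fun j => supBall_C va (a j) (hr j) c), ciInf_const]


end
end

section
/- Let k be an algebraically closed field complete with respect to a nontrivial nonarchimedean absolute value |·|, and let (B(a_j, r_j))_{j ∈ J} be a nonempty family of closed balls in k that is totally ordered by inclusion and has empty intersection: ⋂_j B(a_j,r_j) = ∅. Then the multiplicative seminorm N on k[T] defined by N(f) = inf_j sup_{y ∈ B(a_j,r_j)} |f(y)| is a norm: N(f) > 0 for every nonzero polynomial f ∈ k[T]. -/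
noncomputable section

/-- Let `k` be an algebraically closed field, complete with respect to a
nontrivial nonarchimedean absolute value `va`, and let `(B(aⱼ, rⱼ))_{j ∈ J}` be a
nonempty family of closed balls in `k`, totally ordered by inclusion and with empty
intersection.  Then the multiplicative seminorm
`N(f) = inf_j sup_{y ∈ B(aⱼ,rⱼ)} |f(y)|` on `k[T]` is a norm: `N(f) > 0` for every
nonzero polynomial `f`. -/
theorem statement8 {k : Type*} [Field k] [IsAlgClosed k]
    (va : AbsoluteValue k ℝ) (hna : IsNA va)
    (hnt : ∃ c : k, c ≠ 0 ∧ va c ≠ 1) (hcomplete : SeqComplete va)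
    {J : Type*} [Nonempty J] (a : J → k) (rr : J → ℝ) (hr : ∀ j, 0 ≤ rr j)
    (hnested : ∀ i j : J,
      {y : k | va (y - a i) ≤ rr i} ⊆ {y : k | va (y - a j) ≤ rr j} ∨
      {y : k | va (y - a j) ≤ rr j} ⊆ {y : k | va (y - a i) ≤ rr i})
    (hempty : (⋂ j : J, {y : k | va (y - a j) ≤ rr j}) = ∅) :
    ∀ f : Polynomial k, f ≠ 0 → 0 < ⨅ j, supBall va (a j) (rr j) f := by
  classical
  intro f hf
  -- the balls
  set B : J → Set k := fun j => {y : k | va (y - a j) ≤ rr j} with hBdef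
  have hBmem : ∀ j y, y ∈ B j ↔ va (y - a j) ≤ rr j := fun j y => Iff.rfl
  have hcenter : ∀ j, a j ∈ B j := by
    intro j
    simp only [hBdef, Set.mem_setOf_eq, sub_self, map_zero]
    exact hr j
  -- isosceles principle
  have iso : ∀ u v : k, va u < va v → va (v - u) = va v := by
    intro u v h
    have h1 : va (v - u) ≤ max (va v) (va u) := by
      have := hna v (-u)
      simpa [sub_eq_add_neg] using this
    rw [max_eq_left h.le] at h1
    refine le_antisymm h1 ?_
    have h2 : va v ≤ max (va (v - u)) (va u) := by
      have := hna (v - u) u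
      simpa using this
    rcases le_max_iff.mp h2 with h3 | h3
    · exact h3
    · exact absurd h3 (not_le.mpr h)
  -- every point escapes some ball
  have hesc : ∀ z : k, ∃ j, rr j < va (z - a j) := by
    intro z
    by_contra hc
    push_neg at hc
    have hz : z ∈ ⋂ j : J, {y : k | va (y - a j) ≤ rr j} :=
      Set.mem_iInter.mpr fun j => hc j
    rw [hempty] at hz
    exact hz
  choose j0 hj0 using hesc
  -- minimal ball among a finite set of indices
  have hmin : ∀ s : Finset J, ∃ m : J, ∀ i ∈ s, B m ⊆ B i := by
    intro s
    induction s using Finset.induction with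
    | empty => exact ⟨Classical.arbitrary J, by simp⟩
    | @insert i s hi ih =>
      obtain ⟨m, hm⟩ := ih
      rcases hnested m i with h | h
      · exact ⟨m, fun i' hi' => by
          rcases Finset.mem_insert.mp hi' with rfl | hi' <;>
            [exact h; exact hm i' hi']⟩
      · refine ⟨i, fun i' hi' => ?_⟩
        rcases Finset.mem_insert.mp hi' with rfl | hi'
        · exact subset_rfl
        · exact h.trans (hm i' hi')
  obtain ⟨m, hm⟩ := hmin (f.roots.toFinset.image j0)
  have hmsub : ∀ z ∈ f.roots, B m ⊆ B (j0 z) := by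
    intro z hz
    exact hm (j0 z) (Finset.mem_image_of_mem j0 (Multiset.mem_toFinset.mpr hz))
  -- distance from any point of B m to a root z is exactly δ z
  set δ : k → ℝ := fun z => va (z - a (j0 z)) with hδdef
  have hkey : ∀ y ∈ B m, ∀ z ∈ f.roots, va (y - z) = δ z := by
    intro y hy z hz
    have h1 : y ∈ B (j0 z) := hmsub z hz hy
    have h2 : va (y - a (j0 z)) < va (z - a (j0 z)) := lt_of_le_of_lt h1 (hj0 z)
    have h3 := iso (y - a (j0 z)) (z - a (j0 z)) h2
    rw [sub_sub_sub_cancel_right] at h3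
    rw [va.map_sub]
    exact h3
  -- the constant c0
  set c0 : ℝ := va f.leadingCoeff * (f.roots.map δ).prod with hc0def
  have hδpos : ∀ z ∈ f.roots, 0 < δ z := fun z hz =>
    lt_of_le_of_lt (hr (j0 z)) (hj0 z)
  have hc0pos : 0 < c0 := by
    apply mul_pos
    · exact va.pos (Polynomial.leadingCoeff_ne_zero.mpr hf)
    · apply Multiset.prod_pos
      intro x hx
      obtain ⟨z, hz, rfl⟩ := Multiset.mem_map.mp hx
      exact hδpos z hz
  -- factor f
  have hsplit : f = Polynomial.C f.leadingCoeff *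
      (f.roots.map fun z => Polynomial.X - Polynomial.C z).prod :=
    (IsAlgClosed.splits f).eq_prod_roots
  have heval : ∀ y ∈ B m, va (f.eval y) = c0 := by
    intro y hy
    conv_lhs => rw [hsplit]
    rw [Polynomial.eval_mul, Polynomial.eval_C, Polynomial.eval_multiset_prod,
      Multiset.map_map, map_mul, map_multiset_prod, Multiset.map_map, hc0def]
    congr 1
    apply congrArg Multiset.prod
    apply Multiset.map_congr rfl
    intro z hz
    simp only [Function.comp_apply, Polynomial.eval_sub, Polynomial.eval_X,
      Polynomial.eval_C]
    exact hkey y hy z hz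
  -- boundedness of |f| on each ball
  have hbdd : ∀ j, BddAbove ((fun y => va (f.eval y)) '' B j) := by
    intro j
    refine ⟨∑ i ∈ Finset.range (f.natDegree + 1),
      va (f.coeff i) * (va (a j) + rr j) ^ i, ?_⟩
    rintro x ⟨y, hy, rfl⟩
    have hy' : va (y - a j) ≤ rr j := hy
    have hyle : va y ≤ va (a j) + rr j := by
      calc va y = va ((y - a j) + a j) := by ring_nf
        _ ≤ va (y - a j) + va (a j) := va.add_le _ _
        _ ≤ rr j + va (a j) := by linarith [hy']
        _ = va (a j) + rr j := by ring
    show va (Polynomial.eval y f) ≤ _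
    rw [Polynomial.eval_eq_sum_range]
    refine le_trans (va.sum_le _ _) (Finset.sum_le_sum fun i _ => ?_)
    rw [map_mul, map_pow]
    exact mul_le_mul_of_nonneg_left
      (pow_le_pow_left₀ (va.nonneg y) hyle i) (va.nonneg _)
  -- a point of B j ∩ B m for each j
  have hY : ∀ j, ∃ y, y ∈ B j ∧ y ∈ B m := by
    intro j
    rcases hnested j m with h | h
    · exact ⟨a j, hcenter j, h (hcenter j)⟩
    · exact ⟨a m, h (hcenter m), hcenter m⟩
  -- conclude
  have hle : ∀ j, c0 ≤ supBall va (a j) (rr j) f := by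
    intro j
    obtain ⟨y, hy1, hy2⟩ := hY j
    have : c0 = va (f.eval y) := (heval y hy2).symm
    rw [this]
    exact le_csSup (hbdd j) ⟨y, hy1, rfl⟩
  exact lt_of_lt_of_le hc0pos (le_ciInf hle)


end
end

section
/- Let k be an algebraically closed field complete with respect to a nontrivial nonarchimedean absolute value |·|, and let r > 0 be a real number. The set D(r) of all multiplicative seminorms N on the polynomial ring k[T] extending |·| that satisfy N(T) ≤ r, equipped with the topology of pointwise convergence (the subspace topology induced from the product topology on functions k[T] → ℝ), is a compact Hausdorff topological space. -/
noncomputable section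

/-- The Berkovich closed disk of radius `r`: the set of multiplicative seminorms on
`k[T]` extending the absolute value of `k` and satisfying `N(T) ≤ r`. -/
def BerkDisk {k : Type*} [Field k] (va : AbsoluteValue k ℝ) (r : ℝ) :
    Set (Polynomial k → ℝ) :=
  {N | (∀ f : Polynomial k, 0 ≤ N f) ∧
    (∀ f g : Polynomial k, N (f * g) = N f * N g) ∧
    (∀ f g : Polynomial k, N (f + g) ≤ max (N f) (N g)) ∧
    (∀ c : k, N (Polynomial.C c) = va c) ∧
    N Polynomial.X ≤ r}

/-- Let `k` be an algebraically closed field, complete with respect to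
a nontrivial nonarchimedean absolute value `va`, and let `r > 0`.  The set `D(r)` of all
multiplicative seminorms on `k[T]` extending `va` with `N(T) ≤ r`, equipped with the
topology of pointwise convergence, is a compact Hausdorff topological space. -/
theorem statement10 {k : Type*} [Field k] [IsAlgClosed k]
    (va : AbsoluteValue k ℝ) (hna : IsNA va)
    (hnt : ∃ c : k, c ≠ 0 ∧ va c ≠ 1) (hcomplete : SeqComplete va)
    (r : ℝ) (hr : 0 < r) :
    CompactSpace (BerkDisk va r) ∧ T2Space (BerkDisk va r) := by
  refine ⟨?_, inferInstance⟩
  rw [← isCompact_iff_compactSpace]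
  set B : Polynomial k → ℝ := fun f =>
    ∑ i ∈ Finset.range (f.natDegree + 1), va (f.coeff i) * r ^ i with hB
  have hsub : BerkDisk va r ⊆ Set.pi Set.univ (fun f => Set.Icc (0:ℝ) (B f)) := by
    rintro N ⟨h0, hmul, hadd, hC, hX⟩ f _
    refine ⟨h0 f, ?_⟩
    have hN0 : N 0 = 0 := by simpa using hC 0
    have hsum : ∀ (s : Finset ℕ) (g : ℕ → Polynomial k),
        N (∑ i ∈ s, g i) ≤ ∑ i ∈ s, N (g i) := by
      intro s g
      induction s using Finset.induction with
      | empty => simp [hN0]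
      | insert _ _ hns ih =>
        rw [Finset.sum_insert hns, Finset.sum_insert hns]
        calc N (g _ + _) ≤ max (N (g _)) (N _) := hadd _ _
          _ ≤ max (N (g _)) (∑ i ∈ _, N (g i)) := max_le_max le_rfl ih
          _ ≤ N (g _) + ∑ i ∈ _, N (g i) :=
            max_le (le_add_of_nonneg_right (Finset.sum_nonneg fun i _ => h0 _))
              (le_add_of_nonneg_left (h0 _))
    have hXpow : ∀ i : ℕ, N (Polynomial.X ^ i) = (N Polynomial.X) ^ i := by
      intro i
      induction i with
      | zero => simpa using hC 1
      | succ n ih => rw [pow_succ, hmul, ih, pow_succ]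
    calc N f = N (∑ i ∈ Finset.range (f.natDegree + 1),
          Polynomial.C (f.coeff i) * Polynomial.X ^ i) := by
          congr 1
          conv_lhs => rw [Polynomial.as_sum_range' f _ (Nat.lt_succ_self _)]
          simp [Polynomial.C_mul_X_pow_eq_monomial]
      _ ≤ ∑ i ∈ Finset.range (f.natDegree + 1),
            N (Polynomial.C (f.coeff i) * Polynomial.X ^ i) := hsum _ _
      _ ≤ B f := by
          apply Finset.sum_le_sum
          intro i _
          rw [hmul, hC, hXpow]
          exact mul_le_mul_of_nonneg_left (pow_le_pow_left₀ (h0 _) hX i) (va.nonneg _)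
  have hclosed : IsClosed (BerkDisk va r) := by
    have heq : BerkDisk va r =
        (⋂ f : Polynomial k, {N : Polynomial k → ℝ | 0 ≤ N f}) ∩
        ((⋂ f : Polynomial k, ⋂ g : Polynomial k,
            {N : Polynomial k → ℝ | N (f * g) = N f * N g}) ∩
        ((⋂ f : Polynomial k, ⋂ g : Polynomial k,
            {N : Polynomial k → ℝ | N (f + g) ≤ max (N f) (N g)}) ∩
        ((⋂ c : k, {N : Polynomial k → ℝ | N (Polynomial.C c) = va c}) ∩
        {N : Polynomial k → ℝ | N Polynomial.X ≤ r}))) := by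
      ext N
      simp only [BerkDisk, Set.mem_setOf_eq, Set.mem_inter_iff, Set.mem_iInter]
    rw [heq]
    refine (isClosed_iInter fun f => isClosed_le continuous_const (continuous_apply f)).inter
      ((isClosed_iInter fun f => isClosed_iInter fun g =>
          isClosed_eq (continuous_apply (f*g)) ((continuous_apply f).mul (continuous_apply g))).inter
      ((isClosed_iInter fun f => isClosed_iInter fun g =>
          isClosed_le (continuous_apply (f+g)) ((continuous_apply f).max (continuous_apply g))).inter
      ((isClosed_iInter fun c => isClosed_eq (continuous_apply (Polynomial.C c)) continuous_const).inter
        (isClosed_le (continuous_apply Polynomial.X) continuous_const))))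
  exact IsCompact.of_isClosed_subset
    (isCompact_univ_pi fun f => isCompact_Icc) hclosed hsub

end
end

section
/- Let k be a field equipped with a nonarchimedean absolute value |·|. The map Φ from the interval (0,∞) of positive reals to the space of functions k[T] → ℝ (equipped with the product topology, i.e., the topology of pointwise convergence) sending t to the Gauss norm N_t, where N_t(Σ_i a_i T^i) = max_i |a_i| t^i, is a topological embedding: it is injective, continuous, and a homeomorphism onto its image. Consequently, for real numbers 0 < r < R, the skeleton {N_t : r < t < R} of the open annulus is homeomorphic to the real interval (log r, log R) via N_t ↦ log t. -/
noncomputable section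

/-- A finite sup' of continuous real-valued functions is continuous. -/
lemma cont_sup' {ι X : Type*} [TopologicalSpace X] (s : Finset ι) (hs : s.Nonempty)
    (F : ι → X → ℝ) (hF : ∀ i, Continuous (F i)) :
    Continuous fun x => s.sup' hs (fun i => F i x) := by
  induction hs using Finset.Nonempty.cons_induction with
  | singleton i => simpa using hF i
  | cons i s hi hs ih =>
      have : (fun x => (Finset.cons i s hi).sup' (Finset.cons_nonempty hi) (fun j => F j x)) =
          fun x => max (F i x) (s.sup' hs fun j => F j x) := by
        funext x; exact Finset.sup'_cons hs (fun j => F j x)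
      rw [this]
      exact (hF i).max ih

/-- For `t > 0`, the Gauss norm is a finite maximum. -/
lemma gauss_eq_sup' {k : Type*} [Field k] (va : AbsoluteValue k ℝ) {t : ℝ} (ht : 0 < t)
    (f : Polynomial k) :
    gaussNorm va t f = (Finset.range (f.natDegree + 1)).sup' ⟨0, by simp⟩
      (fun i => va (f.coeff i) * t ^ i) := by
  set g : ℕ → ℝ := fun i => va (f.coeff i) * t ^ i with hg
  set S := (Finset.range (f.natDegree + 1)).sup' ⟨0, by simp⟩ g with hS
  have hg0 : ∀ i, 0 ≤ g i := fun i => mul_nonneg (va.nonneg _) (pow_nonneg ht.le i)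
  have hub : ∀ i, g i ≤ S := by
    intro i
    rcases le_or_gt i f.natDegree with h | h
    · exact Finset.le_sup' g (Finset.mem_range.mpr (by omega))
    · have : g i = 0 := by simp [hg, Polynomial.coeff_eq_zero_of_natDegree_lt h]
      rw [this]
      exact le_trans (hg0 0) (Finset.le_sup' g (by simp))
  refine le_antisymm (ciSup_le hub) (Finset.sup'_le _ _ fun i _ => ?_)
  exact le_ciSup ⟨S, by rintro x ⟨i, rfl⟩; exact hub i⟩ i

/-- For `t > 0`, the Gauss norm of `X` is `t`. -/
lemma gauss_X {k : Type*} [Field k] (va : AbsoluteValue k ℝ) {t : ℝ} (ht : 0 < t) :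
    gaussNorm va t (Polynomial.X : Polynomial k) = t := by
  have hub : ∀ i : ℕ, va ((Polynomial.X : Polynomial k).coeff i) * t ^ i ≤ t := by
    intro i
    rcases eq_or_ne i 1 with rfl | h
    · simp
    · simp [Polynomial.coeff_X, Ne.symm h, ht.le]
  refine le_antisymm (ciSup_le hub) ?_
  have := le_ciSup (f := fun i : ℕ => va ((Polynomial.X : Polynomial k).coeff i) * t ^ i)
    ⟨t, by rintro x ⟨i, rfl⟩; exact hub i⟩ 1
  simpa [gaussNorm] using this

/-- Each coordinate `t ↦ N_t(f)` is continuous on `(0, ∞)`. -/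
lemma gauss_cont {k : Type*} [Field k] (va : AbsoluteValue k ℝ) (f : Polynomial k) :
    Continuous fun t : Set.Ioi (0 : ℝ) => gaussNorm va (t : ℝ) f := by
  have : (fun t : Set.Ioi (0 : ℝ) => gaussNorm va (t : ℝ) f) =
      fun t : Set.Ioi (0 : ℝ) => (Finset.range (f.natDegree + 1)).sup' ⟨0, by simp⟩
        (fun i => va (f.coeff i) * (t : ℝ) ^ i) := by
    funext t; exact gauss_eq_sup' va t.2 f
  rw [this]
  exact cont_sup' _ _ _ fun i =>
    continuous_const.mul ((continuous_pow i).comp continuous_subtype_val)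

/-- Let `k` be a field with a nonarchimedean absolute value `va`.  The
map `Φ : (0,∞) → (k[T] → ℝ)`, `t ↦ N_t` (the Gauss norm of radius `t`), is a topological
embedding for the topology of pointwise convergence; consequently, for `0 < r < R`, the
skeleton `{N_t : r < t < R}` of the open annulus is homeomorphic to the real interval
`(log r, log R)` via `N_t ↦ log t`. -/
theorem statement11 {k : Type*} [Field k] (va : AbsoluteValue k ℝ) (hna : IsNA va) :
    Topology.IsEmbedding (fun t : Set.Ioi (0 : ℝ) => gaussNorm va (t : ℝ)) ∧
    ∀ r R : ℝ, 0 < r → r < R →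
      ∃ e : {N : Polynomial k → ℝ // ∃ t : ℝ, r < t ∧ t < R ∧ N = gaussNorm va t} ≃ₜ
          Set.Ioo (Real.log r) (Real.log R),
        ∀ (t : ℝ) (h1 : r < t) (h2 : t < R),
          (e ⟨gaussNorm va t, t, h1, h2, rfl⟩ : ℝ) = Real.log t := by
  constructor
  · -- the embedding part
    have hcont : Continuous (fun t : Set.Ioi (0 : ℝ) => gaussNorm va (t : ℝ)) :=
      continuous_pi fun f => gauss_cont va f
    have hψ : Continuous (fun N : Polynomial k → ℝ => N Polynomial.X) := continuous_apply _
    refine Topology.IsEmbedding.of_comp hcont hψ ?_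
    have : ((fun N : Polynomial k → ℝ => N Polynomial.X) ∘
        (fun t : Set.Ioi (0 : ℝ) => gaussNorm va (t : ℝ))) = Subtype.val := by
      funext t; exact gauss_X va t.2
    rw [this]
    exact Topology.IsEmbedding.subtypeVal
  · intro r R hr hrR
    have hR : 0 < R := hr.trans hrR
    have hpos : ∀ N : {N : Polynomial k → ℝ // ∃ t : ℝ, r < t ∧ t < R ∧ N = gaussNorm va t},
        r < N.1 Polynomial.X ∧ N.1 Polynomial.X < R := by
      rintro ⟨N, t, h1, h2, rfl⟩
      show r < gaussNorm va t Polynomial.X ∧ gaussNorm va t Polynomial.X < R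
      rw [gauss_X va (hr.trans h1)]
      exact ⟨h1, h2⟩
    have hXmem : ∀ N : {N : Polynomial k → ℝ // ∃ t : ℝ, r < t ∧ t < R ∧ N = gaussNorm va t},
        Real.log (N.1 Polynomial.X) ∈ Set.Ioo (Real.log r) (Real.log R) :=
      fun N => ⟨Real.log_lt_log hr (hpos N).1, Real.log_lt_log (hr.trans (hpos N).1) (hpos N).2⟩
    have hmem : ∀ s : Set.Ioo (Real.log r) (Real.log R),
        ∃ t : ℝ, r < t ∧ t < R ∧ gaussNorm va (Real.exp (s : ℝ)) = gaussNorm va t := by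
      intro s
      refine ⟨Real.exp (s : ℝ), ?_, ?_, rfl⟩
      · calc r = Real.exp (Real.log r) := (Real.exp_log hr).symm
          _ < Real.exp (s : ℝ) := Real.exp_lt_exp.mpr s.2.1
      · calc Real.exp (s : ℝ) < Real.exp (Real.log R) := Real.exp_lt_exp.mpr s.2.2
          _ = R := Real.exp_log hR
    refine ⟨{
      toFun := fun N => ⟨Real.log (N.1 Polynomial.X), hXmem N⟩
      invFun := fun s => ⟨gaussNorm va (Real.exp (s : ℝ)), hmem s⟩
      left_inv := by
        rintro ⟨N, t, h1, h2, rfl⟩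
        have ht : 0 < t := hr.trans h1
        apply Subtype.ext
        show gaussNorm va (Real.exp (Real.log (gaussNorm va t Polynomial.X))) = gaussNorm va t
        rw [gauss_X va ht, Real.exp_log ht]
      right_inv := by
        intro s
        apply Subtype.ext
        show Real.log (gaussNorm va (Real.exp (s : ℝ)) Polynomial.X) = (s : ℝ)
        rw [gauss_X va (Real.exp_pos _), Real.log_exp]
      continuous_toFun := by
        refine Continuous.subtype_mk ?_ _
        have h1c : Continuous (fun N : {N : Polynomial k → ℝ //
            ∃ t : ℝ, r < t ∧ t < R ∧ N = gaussNorm va t} => N.1 Polynomial.X) :=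
          (continuous_apply Polynomial.X).comp continuous_subtype_val
        rw [continuous_iff_continuousAt]
        intro N
        exact ContinuousAt.comp (g := Real.log) (f := fun M : {N : Polynomial k → ℝ //
            ∃ t : ℝ, r < t ∧ t < R ∧ N = gaussNorm va t} => M.1 Polynomial.X)
          (Real.continuousAt_log (hr.trans (hpos N).1).ne') h1c.continuousAt
      continuous_invFun := by
        refine Continuous.subtype_mk ?_ _
        refine continuous_pi fun f => ?_
        have hj : Continuous (fun s : Set.Ioo (Real.log r) (Real.log R) =>
            (⟨Real.exp (s : ℝ), Real.exp_pos _⟩ : Set.Ioi (0 : ℝ))) :=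
          (Real.continuous_exp.comp continuous_subtype_val).subtype_mk _
        exact (gauss_cont va f).comp hj }, ?_⟩
    intro t h1 h2
    show Real.log (gaussNorm va t Polynomial.X) = Real.log t
    rw [gauss_X va (hr.trans h1)]

end
end

section
/- Let k be an algebraically closed field complete with respect to a nontrivial nonarchimedean absolute value |·| with residue field k̃, let c ∈ k^× and set r = |c|. Let η_{0,r} denote the unique multiplicative absolute value on the rational function field k(T) extending the Gauss norm of radius r on k[T], and let κ be the residue field of its valuation ring {h ∈ k(T) : η_{0,r}(h) ≤ 1}. Then the image of c^{-1}T in κ is transcendental over k̃; in particular κ has transcendence degree 1 over k̃, so η_{0,r} is a point of type II. -/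
noncomputable section

/-- The supremum defining the Gauss norm is attained at some index. -/
lemma gaussNorm_exists_max {k : Type*} [Field k] (va : AbsoluteValue k ℝ) {r : ℝ}
    (hr : 0 ≤ r) (p : Polynomial k) :
    ∃ j, (∀ i, va (p.coeff i) * r ^ i ≤ va (p.coeff j) * r ^ j) ∧
      gaussNorm va r p = va (p.coeff j) * r ^ j := by
  obtain ⟨j, -, hj⟩ := Finset.exists_max_image (Finset.range (p.natDegree + 1))
    (fun i => va (p.coeff i) * r ^ i) ⟨0, Finset.mem_range.mpr (Nat.succ_pos _)⟩
  have hmax : ∀ i, va (p.coeff i) * r ^ i ≤ va (p.coeff j) * r ^ j := by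
    intro i
    by_cases hi : i ≤ p.natDegree
    · exact hj i (Finset.mem_range.mpr (Nat.lt_succ_of_le hi))
    · rw [p.coeff_eq_zero_of_natDegree_lt (lt_of_not_ge hi), map_zero, zero_mul]
      exact le_trans (mul_nonneg (va.nonneg _) (pow_nonneg hr _))
        (hj 0 (Finset.mem_range.mpr (Nat.succ_pos _)))
  have hdef : gaussNorm va r p = ⨆ i, va (p.coeff i) * r ^ i := rfl
  rw [hdef]
  have hbdd : BddAbove (Set.range fun i => va (p.coeff i) * r ^ i) :=
    ⟨_, by rintro y ⟨i, rfl⟩; exact hmax i⟩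
  exact ⟨j, hmax, le_antisymm (ciSup_le hmax) (le_ciSup hbdd j)⟩

/-- Each coefficient term is bounded by the Gauss norm. -/
lemma coeff_le_gaussNorm {k : Type*} [Field k] (va : AbsoluteValue k ℝ) {r : ℝ}
    (hr : 0 ≤ r) (p : Polynomial k) (i : ℕ) :
    va (p.coeff i) * r ^ i ≤ gaussNorm va r p := by
  obtain ⟨j, hj, hje⟩ := gaussNorm_exists_max va hr p
  rw [hje]
  exact hj i

set_option maxHeartbeats 2000000
set_option synthInstance.maxHeartbeats 1000000

/-- Let `k` be an algebraically closed field, complete with respect to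
a nontrivial nonarchimedean absolute value `va` with residue field `k̃`, let `c ∈ kˣ`
and `r = |c|`.  Let `v = η_{0,r}` be the (unique) absolute value on `k(T)` extending the
Gauss norm of radius `r` on `k[T]`, with residue field `κ`.  Then the image of `c⁻¹ T`
in `κ` is transcendental over `k̃`; in particular `κ` has transcendence degree `1` over
`k̃`, so `η_{0,r}` is a point of type II. -/
theorem statement12 {k : Type*} [Field k] [IsAlgClosed k]
    (va : AbsoluteValue k ℝ) (hka : IsNA va)
    (hknt : ∃ x : k, x ≠ 0 ∧ va x ≠ 1) (hkcomplete : SeqComplete va)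
    (c : k) (hc : c ≠ 0) (r : ℝ) (hr : r = va c)
    -- v = η_{0,r} is the absolute value on k(T) extending the Gauss norm of radius r
    (v : AbsoluteValue (RatFunc k) ℝ) (hv : IsNA v)
    (hgauss : ∀ f : Polynomial k,
      v (algebraMap (Polynomial k) (RatFunc k) f) = gaussNorm va r f)
    (hvk : ∀ x : k, v (algebraMap k (RatFunc k) x) = va x) :
    -- c⁻¹ T lies in the valuation ring of v, its residue class is transcendental over
    -- k̃, and κ(v) has transcendence degree 1 over k̃
    ∃ hmem : algebraMap (Polynomial k) (RatFunc k)
        (Polynomial.C c⁻¹ * Polynomial.X) ∈ vRing v hv,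
      @Transcendental (ResF va hka) (ResF v hv) _ _
        (resMap (algebraMap k (RatFunc k)) va v hka hv hvk).toAlgebra
        (Ideal.Quotient.mk (vIdeal v hv)
          ⟨algebraMap (Polynomial k) (RatFunc k)
            (Polynomial.C c⁻¹ * Polynomial.X), hmem⟩) ∧
      @IsTranscendenceBasis Unit (ResF va hka) (ResF v hv) _ _
        (resMap (algebraMap k (RatFunc k)) va v hka hv hvk).toAlgebra
        (fun _ => Ideal.Quotient.mk (vIdeal v hv)
          ⟨algebraMap (Polynomial k) (RatFunc k)
            (Polynomial.C c⁻¹ * Polynomial.X), hmem⟩) := by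
  have hvac : va c ≠ 0 := ne_of_gt (va.pos hc)
  have hr0 : (0:ℝ) < r := hr ▸ va.pos hc
  -- membership of τ = c⁻¹ T in the valuation ring
  have hmemτ : algebraMap (Polynomial k) (RatFunc k)
      (Polynomial.C c⁻¹ * Polynomial.X) ∈ vRing v hv := by
    show v _ ≤ 1
    rw [hgauss]
    obtain ⟨j, hj, hje⟩ := gaussNorm_exists_max va hr0.le (Polynomial.C c⁻¹ * Polynomial.X)
    rw [hje]
    rcases eq_or_ne j 1 with h1 | h1
    · subst h1
      have : (Polynomial.C c⁻¹ * Polynomial.X).coeff 1 = c⁻¹ := by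
        rw [Polynomial.coeff_C_mul, Polynomial.coeff_X_one, mul_one]
      rw [this, map_inv₀, pow_one, hr, inv_mul_cancel₀ hvac]
    · have : (Polynomial.C c⁻¹ * Polynomial.X).coeff j = 0 := by
        rw [Polynomial.coeff_C_mul, Polynomial.coeff_X, if_neg (fun h => h1 h.symm), mul_zero]
      rw [this, map_zero, zero_mul]
      exact zero_le_one
  letI : Algebra (ResF va hka) (ResF v hv) :=
    (resMap (algebraMap k (RatFunc k)) va v hka hv hvk).toAlgebra
  set t : ResF v hv := Ideal.Quotient.mk (vIdeal v hv)
    ⟨algebraMap (Polynomial k) (RatFunc k) (Polynomial.C c⁻¹ * Polynomial.X), hmemτ⟩ with ht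
  -- coefficients of the "rescaled" polynomial attached to P : (O_va)[X]
  have hcoeffP : ∀ (P : Polynomial (vRing va hka)) (j : ℕ),
      (∑ i ∈ P.support,
        Polynomial.C ((P.coeff i : k) * c⁻¹ ^ i) * Polynomial.X ^ i).coeff j
        = (P.coeff j : k) * c⁻¹ ^ j := by
    intro P j
    rw [Polynomial.finset_sum_coeff, Finset.sum_eq_single j
      (fun i _ hij => by
        rw [Polynomial.coeff_C_mul, Polynomial.coeff_X_pow, if_neg (Ne.symm hij), mul_zero])
      (fun hj => by
        rw [Polynomial.coeff_C_mul, Polynomial.coeff_X_pow, if_pos rfl, mul_one,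
          Polynomial.notMem_support_iff.mp hj]
        simp)]
    rw [Polynomial.coeff_C_mul, Polynomial.coeff_X_pow, if_pos rfl, mul_one]
  have hvalP : ∀ (P : Polynomial (vRing va hka)) (i : ℕ),
      va ((∑ i ∈ P.support,
        Polynomial.C ((P.coeff i : k) * c⁻¹ ^ i) * Polynomial.X ^ i).coeff i) * r ^ i
        = va (P.coeff i : k) := by
    intro P i
    rw [hcoeffP, map_mul, map_pow, map_inv₀, inv_pow, hr, mul_assoc,
      inv_mul_cancel₀ (pow_ne_zero _ hvac), mul_one]
  have hleP : ∀ P : Polynomial (vRing va hka),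
      v (algebraMap (Polynomial k) (RatFunc k) (∑ i ∈ P.support,
        Polynomial.C ((P.coeff i : k) * c⁻¹ ^ i) * Polynomial.X ^ i)) ≤ 1 ∧
      ∀ i, va (P.coeff i : k) ≤ v (algebraMap (Polynomial k) (RatFunc k) (∑ i ∈ P.support,
        Polynomial.C ((P.coeff i : k) * c⁻¹ ^ i) * Polynomial.X ^ i)) := by
    intro P
    rw [hgauss]
    obtain ⟨j, hj, hje⟩ := gaussNorm_exists_max va hr0.le (∑ i ∈ P.support,
      Polynomial.C ((P.coeff i : k) * c⁻¹ ^ i) * Polynomial.X ^ i)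
    constructor
    · rw [hje, hvalP]
      exact (P.coeff j).2
    · intro i
      rw [← hvalP P i]
      exact coeff_le_gaussNorm va hr0.le _ i
  -- the reduction of such an element is a polynomial in t
  have hredP : ∀ (P : Polynomial (vRing va hka)) (q : Polynomial k),
      q = (∑ i ∈ P.support,
        Polynomial.C ((P.coeff i : k) * c⁻¹ ^ i) * Polynomial.X ^ i) →
      ∀ hq : algebraMap (Polynomial k) (RatFunc k) q ∈ vRing v hv,
      Ideal.Quotient.mk (vIdeal v hv) ⟨algebraMap (Polynomial k) (RatFunc k) q, hq⟩
        = Polynomial.aeval t (P.map (Ideal.Quotient.mk (vIdeal va hka))) := by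
    intro P q hq0 hq
    subst hq0
    have hsub : (⟨algebraMap (Polynomial k) (RatFunc k) (∑ i ∈ P.support,
          Polynomial.C ((P.coeff i : k) * c⁻¹ ^ i) * Polynomial.X ^ i), hq⟩ : vRing v hv)
        = ∑ i ∈ P.support,
          (⟨algebraMap k (RatFunc k) (P.coeff i : k),
            by show v _ ≤ 1; rw [hvk]; exact (P.coeff i).2⟩ : vRing v hv) *
          (⟨algebraMap (Polynomial k) (RatFunc k) (Polynomial.C c⁻¹ * Polynomial.X),
            hmemτ⟩ : vRing v hv) ^ i := by
      have hflat : algebraMap (Polynomial k) (RatFunc k) (∑ i ∈ P.support,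
          Polynomial.C ((P.coeff i : k) * c⁻¹ ^ i) * Polynomial.X ^ i)
          = ∑ i ∈ P.support,
            (((⟨algebraMap k (RatFunc k) (P.coeff i : k),
              by show v _ ≤ 1; rw [hvk]; exact (P.coeff i).2⟩ : vRing v hv) *
            (⟨algebraMap (Polynomial k) (RatFunc k) (Polynomial.C c⁻¹ * Polynomial.X),
              hmemτ⟩ : vRing v hv) ^ i : vRing v hv) : RatFunc k) := by
        rw [map_sum]
        refine Finset.sum_congr rfl fun i _ => ?_
        simp only [MulMemClass.coe_mul, SubmonoidClass.coe_pow]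
        rw [RatFunc.algebraMap_eq_C, ← RatFunc.algebraMap_C, ← map_pow, ← map_mul]
        congr 1
        rw [mul_pow, ← Polynomial.C_pow, ← mul_assoc, ← Polynomial.C_mul]
      exact Subtype.ext (hflat.trans (AddSubmonoidClass.coe_finset_sum _ _).symm)
    have hres : ∀ a : vRing va hka,
        (algebraMap (ResF va hka) (ResF v hv)) (Ideal.Quotient.mk (vIdeal va hka) a)
          = Ideal.Quotient.mk (vIdeal v hv)
            ⟨algebraMap k (RatFunc k) (a : k), by show v _ ≤ 1; rw [hvk]; exact a.2⟩ := by
      intro a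
      rw [RingHom.algebraMap_toAlgebra]
      exact Ideal.quotientMap_mk
    rw [hsub, map_sum (Ideal.Quotient.mk (vIdeal v hv)) _ P.support]
    rw [Polynomial.aeval_def, Polynomial.eval₂_map, Polynomial.eval₂_eq_sum,
      Polynomial.sum_def]
    refine Finset.sum_congr rfl fun i _ => ?_
    simp only [RingHom.comp_apply]
    rw [map_mul, map_pow, hres]
  -- transcendence of t
  have htrans : Transcendental (ResF va hka) t := by
    rintro ⟨Q, hQ0, hQev⟩
    obtain ⟨P, hPQ⟩ := Polynomial.map_surjective
      (Ideal.Quotient.mk (vIdeal va hka)) Ideal.Quotient.mk_surjective Q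
    have hp := (hleP P).1
    have h0 : Ideal.Quotient.mk (vIdeal v hv) ⟨algebraMap (Polynomial k) (RatFunc k)
        (∑ i ∈ P.support, Polynomial.C ((P.coeff i : k) * c⁻¹ ^ i) * Polynomial.X ^ i),
        hp⟩ = 0 := by
      rw [hredP P _ rfl hp, hPQ]
      exact hQev
    have hlt : v (algebraMap (Polynomial k) (RatFunc k) (∑ i ∈ P.support,
        Polynomial.C ((P.coeff i : k) * c⁻¹ ^ i) * Polynomial.X ^ i)) < 1 :=
      Ideal.Quotient.eq_zero_iff_mem.mp h0
    have hex : ∃ n, Q.coeff n ≠ 0 := by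
      by_contra hall
      push_neg at hall
      exact hQ0 (Polynomial.ext fun n => by simp [hall n])
    obtain ⟨n, hn⟩ := hex
    have h1le : (1:ℝ) ≤ va (P.coeff n : k) := by
      by_contra hlt1
      push_neg at hlt1
      apply hn
      rw [← hPQ, Polynomial.coeff_map]
      exact Ideal.Quotient.eq_zero_iff_mem.mpr hlt1
    linarith [(hleP P).2 n]
  -- every element of the residue field κ is algebraic over k̃(t)
  have halg : ∀ u : ResF v hv,
      IsAlgebraic (Algebra.adjoin (ResF va hka) (Set.range fun _ : Unit => t)) u := by
    intro u
    obtain ⟨x, rfl⟩ := Ideal.Quotient.mk_surjective u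
    obtain ⟨h, hh⟩ := x
    have hh' : v h ≤ 1 := hh
    have hd0 : algebraMap (Polynomial k) (RatFunc k) h.denom ≠ 0 :=
      RatFunc.algebraMap_ne_zero h.denom_ne_zero
    have hrel : h * algebraMap (Polynomial k) (RatFunc k) h.denom
        = algebraMap (Polynomial k) (RatFunc k) h.num := by
      have h1 := congrArg (fun z => z * algebraMap (Polynomial k) (RatFunc k) h.denom)
        (RatFunc.num_div_denom h)
      simp only [div_mul_cancel₀ _ hd0] at h1
      exact h1.symm
    obtain ⟨j, hj, hje⟩ := gaussNorm_exists_max va hr0.le h.denom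
    have hdpos : 0 < v (algebraMap (Polynomial k) (RatFunc k) h.denom) := v.pos hd0
    set b := h.denom.coeff j * c ^ j with hb
    have hvb : va b = v (algebraMap (Polynomial k) (RatFunc k) h.denom) := by
      rw [hgauss, hje, hb, map_mul, map_pow, hr]
    have hb0 : b ≠ 0 := by
      intro h0
      rw [h0, map_zero] at hvb
      exact hdpos.ne hvb
    set g' : Polynomial k := Polynomial.C b⁻¹ * h.denom with hg'
    set f' : Polynomial k := Polynomial.C b⁻¹ * h.num with hf'
    have hρg : algebraMap (Polynomial k) (RatFunc k) g'
        = algebraMap k (RatFunc k) b⁻¹ * algebraMap (Polynomial k) (RatFunc k) h.denom := by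
      rw [hg', map_mul]; rfl
    have hρf : algebraMap (Polynomial k) (RatFunc k) f'
        = algebraMap k (RatFunc k) b⁻¹ * algebraMap (Polynomial k) (RatFunc k) h.num := by
      rw [hf', map_mul]; rfl
    have hg1 : v (algebraMap (Polynomial k) (RatFunc k) g') = 1 := by
      rw [hρg, map_mul, hvk, map_inv₀, hvb, inv_mul_cancel₀ hdpos.ne']
    have hrel2 : h * algebraMap (Polynomial k) (RatFunc k) g'
        = algebraMap (Polynomial k) (RatFunc k) f' := by
      rw [hρg, hρf, ← hrel]; ring
    have hfle : v (algebraMap (Polynomial k) (RatFunc k) f') ≤ 1 := by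
      rw [← hrel2, map_mul, hg1, mul_one]; exact hh'
    have hgc : ∀ p : Polynomial k, v (algebraMap (Polynomial k) (RatFunc k) p) ≤ 1 →
        ∀ i, va (p.coeff i * c ^ i) ≤ 1 := by
      intro p hp i
      have h1 := coeff_le_gaussNorm va hr0.le p i
      rw [← hgauss] at h1
      calc va (p.coeff i * c ^ i) = va (p.coeff i) * r ^ i := by rw [map_mul, map_pow, hr]
      _ ≤ 1 := h1.trans hp
    set Pg : Polynomial (vRing va hka) := ∑ i ∈ g'.support,
      Polynomial.C (⟨g'.coeff i * c ^ i, hgc g' hg1.le i⟩ : vRing va hka) *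
        Polynomial.X ^ i with hPg
    set Pf : Polynomial (vRing va hka) := ∑ i ∈ f'.support,
      Polynomial.C (⟨f'.coeff i * c ^ i, hgc f' hfle i⟩ : vRing va hka) *
        Polynomial.X ^ i with hPf
    have hPgc : ∀ n, ((Pg.coeff n : vRing va hka) : k) = g'.coeff n * c ^ n := by
      intro n
      rw [hPg, Polynomial.finset_sum_coeff, Finset.sum_eq_single n
        (fun i _ hin => by
          rw [Polynomial.coeff_C_mul, Polynomial.coeff_X_pow, if_neg (Ne.symm hin), mul_zero])
        (fun hn => by
          rw [Polynomial.coeff_C_mul, Polynomial.coeff_X_pow, if_pos rfl, mul_one]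
          exact Subtype.ext (by simp [Polynomial.notMem_support_iff.mp hn]))]
      rw [Polynomial.coeff_C_mul, Polynomial.coeff_X_pow, if_pos rfl, mul_one]
    have hPfc : ∀ n, ((Pf.coeff n : vRing va hka) : k) = f'.coeff n * c ^ n := by
      intro n
      rw [hPf, Polynomial.finset_sum_coeff, Finset.sum_eq_single n
        (fun i _ hin => by
          rw [Polynomial.coeff_C_mul, Polynomial.coeff_X_pow, if_neg (Ne.symm hin), mul_zero])
        (fun hn => by
          rw [Polynomial.coeff_C_mul, Polynomial.coeff_X_pow, if_pos rfl, mul_one]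
          exact Subtype.ext (by simp [Polynomial.notMem_support_iff.mp hn]))]
      rw [Polynomial.coeff_C_mul, Polynomial.coeff_X_pow, if_pos rfl, mul_one]
    have hpg : g' = ∑ i ∈ Pg.support,
        Polynomial.C ((Pg.coeff i : k) * c⁻¹ ^ i) * Polynomial.X ^ i := by
      ext n
      rw [hcoeffP Pg n, hPgc n, mul_assoc, ← mul_pow, mul_inv_cancel₀ hc, one_pow, mul_one]
    have hpf : f' = ∑ i ∈ Pf.support,
        Polynomial.C ((Pf.coeff i : k) * c⁻¹ ^ i) * Polynomial.X ^ i := by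
      ext n
      rw [hcoeffP Pf n, hPfc n, mul_assoc, ← mul_pow, mul_inv_cancel₀ hc, one_pow, mul_one]
    have hmemg : algebraMap (Polynomial k) (RatFunc k) g' ∈ vRing v hv := hg1.le
    have hmemf : algebraMap (Polynomial k) (RatFunc k) f' ∈ vRing v hv := hfle
    have hredg := hredP Pg g' hpg hmemg
    have hredf := hredP Pf f' hpf hmemf
    set Gt := Pg.map (Ideal.Quotient.mk (vIdeal va hka)) with hGt
    set Ft := Pf.map (Ideal.Quotient.mk (vIdeal va hka)) with hFt
    have hGne : Gt ≠ 0 := by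
      intro h0
      have hcj : Gt.coeff j = 0 := by rw [h0, Polynomial.coeff_zero]
      rw [hGt, Polynomial.coeff_map] at hcj
      have hmemj : Pg.coeff j ∈ vIdeal va hka := Ideal.Quotient.eq_zero_iff_mem.mp hcj
      have hlt1 : va ((Pg.coeff j : vRing va hka) : k) < 1 := hmemj
      rw [hPgc j] at hlt1
      have hone : g'.coeff j * c ^ j = 1 := by
        rw [hg', Polynomial.coeff_C_mul, mul_assoc, ← hb, inv_mul_cancel₀ hb0]
      rw [hone, map_one] at hlt1
      exact lt_irrefl _ hlt1
    have hGev : Polynomial.aeval t Gt ≠ 0 := fun h0 => htrans ⟨Gt, hGne, h0⟩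
    have hprod : (⟨h, hh⟩ : vRing v hv) *
        ⟨algebraMap (Polynomial k) (RatFunc k) g', hmemg⟩
        = ⟨algebraMap (Polynomial k) (RatFunc k) f', hmemf⟩ := Subtype.ext hrel2
    have hkey : Ideal.Quotient.mk (vIdeal v hv) ⟨h, hh⟩ * Polynomial.aeval t Gt
        = Polynomial.aeval t Ft := by
      rw [← hredg, ← hredf, ← map_mul, hprod]
    have hrange : (Set.range fun _ : Unit => t) = {t} := Set.range_const
    have hGmem : Polynomial.aeval t Gt ∈
        Algebra.adjoin (ResF va hka) (Set.range fun _ : Unit => t) := by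
      rw [hrange]
      exact Polynomial.aeval_mem_adjoin_singleton _ _
    have hFmem : Polynomial.aeval t Ft ∈
        Algebra.adjoin (ResF va hka) (Set.range fun _ : Unit => t) := by
      rw [hrange]
      exact Polynomial.aeval_mem_adjoin_singleton _ _
    refine ⟨Polynomial.C (⟨Polynomial.aeval t Gt, hGmem⟩ :
        Algebra.adjoin (ResF va hka) (Set.range fun _ : Unit => t)) * Polynomial.X +
        Polynomial.C (-(⟨Polynomial.aeval t Ft, hFmem⟩ :
          Algebra.adjoin (ResF va hka) (Set.range fun _ : Unit => t))), ?_, ?_⟩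
    · intro h0
      apply hGev
      have h1 := congrArg (fun q => Polynomial.coeff q 1) h0
      simp only [Polynomial.coeff_add, Polynomial.coeff_C_mul, Polynomial.coeff_X_one,
        mul_one, Polynomial.coeff_C, Polynomial.coeff_zero] at h1
      rw [if_neg one_ne_zero, add_zero] at h1
      exact congrArg Subtype.val h1
    · rw [map_add, map_mul, Polynomial.aeval_C, Polynomial.aeval_C, Polynomial.aeval_X]
      show Polynomial.aeval t Gt * Ideal.Quotient.mk (vIdeal v hv) ⟨h, hh⟩ +
        -Polynomial.aeval t Ft = 0
      rw [mul_comm, hkey, add_neg_cancel]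
  -- assemble the result
  refine ⟨hmemτ, htrans, ?_, ?_⟩
  · exact algebraicIndependent_unique_type_iff.mpr htrans
  · intro s hs hsub
    refine hsub.antisymm ?_
    intro u hu
    rcases eq_or_ne u t with rfl | hne
    · exact ⟨(), rfl⟩
    · exfalso
      have hj : Function.Injective (fun o : Option Unit =>
          (o.elim (⟨u, hu⟩ : s) (fun _ => ⟨t, hsub ⟨(), rfl⟩⟩))) := by
        intro o1 o2 h12
        cases o1 <;> cases o2
        · rfl
        · exact absurd (congrArg Subtype.val h12) hne
        · exact absurd (congrArg Subtype.val h12).symm hne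
        · exact congrArg some (Subsingleton.elim _ _)
      have hcomp := hs.comp _ hj
      have heq : ((fun x : s => (x : ResF v hv)) ∘ fun o : Option Unit =>
          (o.elim (⟨u, hu⟩ : s) (fun _ => ⟨t, hsub ⟨(), rfl⟩⟩)))
          = fun o : Option Unit => o.elim u (fun _ => t) := by
        funext o; cases o <;> rfl
      replace hcomp : AlgebraicIndependent (ResF va hka)
          (fun o : Option Unit => o.elim u (fun _ => t)) := by rw [← heq]; exact hcomp
      have htransu := ((algebraicIndependent_unique_type_iff (x := fun _ : Unit => t)).mpr htrans).option_iff_transcendental u |>.mp hcomp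
      exact htransu (halg u)

end
end
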